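/- arXiv:2001.00221 — 10 statements merged into one kernel-verified Lean document; each statement's English description precedes it below -/
import Mathlib

section
/- For every finite simple graph G without isolated vertices, max{χ(G), γ_t(G)} ≤ χ_td(G) ≤ γ_t(G) + χ(G), where χ(G) is the chromatic number, γ_t(G) the total domination number, and χ_td(G) the total dominator chromatic number. -/
/-- The vertex type of the Kneser graph `KG(n,2)`: 2-element subsets of `{0,…,n-1}`. -/
abbrev KVert (n : ℕ) := {s : Finset (Fin n) // s.card = 2}

/-- The Kneser graph `KG(n,2)`: vertices are 2-subsets, adjacent iff disjoint. -/
def KG2 (n : ℕ) : SimpleGraph (KVert n) where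
  Adj u v := Disjoint u.1 v.1
  symm := ⟨fun u v h => h.symm⟩
  loopless := ⟨fun u h => by
    have h2 := u.2
    have h' : Disjoint u.1 u.1 := h
    rw [disjoint_self] at h'
    simp [h'] at h2⟩

/-- A proper coloring of `G` with `k` (nonempty) color classes: a partition of the
vertex set into `k` nonempty independent sets. -/
def IsProperColoring {V : Type*} (G : SimpleGraph V) {k : ℕ} (C : Fin k → Set V) : Prop :=
  (∀ v, ∃! i, v ∈ C i) ∧ (∀ i, (C i).Nonempty) ∧
    ∀ i, ∀ u ∈ C i, ∀ w ∈ C i, ¬ G.Adj u w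

/-- A total dominator coloring: a proper coloring such that every vertex is adjacent to
all vertices of some (nonempty) color class. -/
def IsTDColoring {V : Type*} (G : SimpleGraph V) {k : ℕ} (C : Fin k → Set V) : Prop :=
  IsProperColoring G C ∧ ∀ v, ∃ i, (C i).Nonempty ∧ ∀ u ∈ C i, G.Adj v u

/-- The chromatic number: minimum number of color classes in a proper coloring. -/
noncomputable def chromNum {V : Type*} (G : SimpleGraph V) : ℕ :=
  sInf {k | ∃ C : Fin k → Set V, IsProperColoring G C}

/-- The total dominator chromatic number: minimum number of color classes in a TDC. -/
noncomputable def tdChromNum {V : Type*} (G : SimpleGraph V) : ℕ :=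
  sInf {k | ∃ C : Fin k → Set V, IsTDColoring G C}

/-- A total dominating set: every vertex has a neighbor in `S`. -/
def IsTotalDomSet {V : Type*} (G : SimpleGraph V) (S : Set V) : Prop :=
  ∀ v, ∃ u ∈ S, G.Adj v u

/-- The total domination number: minimum size of a total dominating set. -/
noncomputable def totalDomNum {V : Type*} [Fintype V] (G : SimpleGraph V) : ℕ :=
  sInf {k | ∃ S : Finset V, IsTotalDomSet G ↑S ∧ S.card = k}

/-- A set of vertices of `KG(n,2)` is starlike if all its 2-subsets share a common symbol. -/
def Starlike {n : ℕ} (A : Set (KVert n)) : Prop :=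
  ∃ a : Fin n, ∀ v ∈ A, a ∈ v.1

/-- A set of vertices of `KG(n,2)` is triangular if it equals `{{a,b},{a,c},{b,c}}`
for three distinct symbols `a, b, c`. -/
def Triangular {n : ℕ} (A : Set (KVert n)) : Prop :=
  ∃ a b c : Fin n, a ≠ b ∧ a ≠ c ∧ b ≠ c ∧
    A = {v : KVert n | v.1 = {a, b} ∨ v.1 = {a, c} ∨ v.1 = {b, c}}

/-- Transport a TD coloring indexed by an arbitrary finite type to one indexed by
`Fin (card ι)`. -/
lemma aux_tdc_card {V : Type*} (G : SimpleGraph V) {ι : Type*} [Fintype ι]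
    (C : ι → Set V)
    (h1 : ∀ v, ∃! i, v ∈ C i) (h2 : ∀ i, (C i).Nonempty)
    (h3 : ∀ i, ∀ u ∈ C i, ∀ w ∈ C i, ¬ G.Adj u w)
    (h4 : ∀ v, ∃ i, (C i).Nonempty ∧ ∀ u ∈ C i, G.Adj v u) :
    ∃ C' : Fin (Fintype.card ι) → Set V, IsTDColoring G C' := by
  set e := Fintype.equivFin ι with he
  refine ⟨fun j => C (e.symm j), ⟨⟨fun v => ?_, fun j => h2 _, fun j => h3 _⟩, fun v => ?_⟩⟩
  · obtain ⟨i, hi, hu⟩ := h1 v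
    refine ⟨e i, by simpa using hi, fun j hj => ?_⟩
    have hij := hu _ hj
    rw [← hij]; simp
  · obtain ⟨i, hne, hadj⟩ := h4 v
    exact ⟨e i, by simpa using hne, fun u hu => hadj u (by simpa using hu)⟩

/-- The singleton coloring is a total dominator coloring (given no isolated vertices). -/
lemma exists_tdc {V : Type*} [Fintype V] (G : SimpleGraph V)
    (hiso : ∀ v : V, ∃ u : V, G.Adj v u) :
    ∃ k, ∃ C : Fin k → Set V, IsTDColoring G C := by
  obtain ⟨C', hC'⟩ := aux_tdc_card G (fun v : V => ({v} : Set V))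
    (fun v => ⟨v, rfl, fun y hy => hy.symm⟩)
    (fun i => ⟨i, rfl⟩)
    (fun i u hu w hw => by
      have hu' : u = i := hu
      have hw' : w = i := hw
      subst hu'; subst hw'; exact G.irrefl)
    (fun v => by
      obtain ⟨u, hu⟩ := hiso v
      exact ⟨u, ⟨u, rfl⟩, fun w hw => by
        have hw' : w = u := hw
        rwa [hw']⟩)
  exact ⟨_, C', hC'⟩

/-- For every finite simple graph `G` without isolated vertices,
`max {χ(G), γₜ(G)} ≤ χ_td(G) ≤ γₜ(G) + χ(G)`. -/
theorem stmt0 {V : Type*} [Fintype V] (G : SimpleGraph V)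
    (hiso : ∀ v : V, ∃ u : V, G.Adj v u) :
    max (chromNum G) (totalDomNum G) ≤ tdChromNum G ∧
      tdChromNum G ≤ totalDomNum G + chromNum G := by
  classical
  obtain ⟨k0, C0, hC0⟩ := exists_tdc G hiso
  have hTne : {k | ∃ C : Fin k → Set V, IsTDColoring G C}.Nonempty := ⟨k0, C0, hC0⟩
  obtain ⟨Ct, hCt⟩ : ∃ C : Fin (tdChromNum G) → Set V, IsTDColoring G C :=
    Nat.sInf_mem hTne
  -- χ(G) ≤ χ_td(G)
  have hchrom_le : chromNum G ≤ tdChromNum G := Nat.sInf_le ⟨Ct, hCt.1⟩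
  -- γ_t(G) ≤ χ_td(G)
  choose r hr using fun i => hCt.1.2.1 i
  have hdom_le : totalDomNum G ≤ tdChromNum G := by
    set Sr : Finset V := Finset.univ.image r with hSr
    have hdom : IsTotalDomSet G ↑Sr := by
      intro v
      obtain ⟨i, _, hadj⟩ := hCt.2 v
      exact ⟨r i, by simp [hSr], hadj _ (hr i)⟩
    have h2 : totalDomNum G ≤ Sr.card := Nat.sInf_le ⟨Sr, hdom, rfl⟩
    calc totalDomNum G ≤ Sr.card := h2
      _ ≤ Finset.univ.card := Finset.card_image_le
      _ = tdChromNum G := by simp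
  -- the upper bound
  have hDne : {k | ∃ S : Finset V, IsTotalDomSet G ↑S ∧ S.card = k}.Nonempty := by
    refine ⟨Finset.univ.card, Finset.univ, fun v => ?_, rfl⟩
    obtain ⟨u, hu⟩ := hiso v
    exact ⟨u, by simp, hu⟩
  obtain ⟨S, hS, hScard⟩ : ∃ S : Finset V, IsTotalDomSet G ↑S ∧ S.card = totalDomNum G :=
    Nat.sInf_mem hDne
  have hPne : {k | ∃ C : Fin k → Set V, IsProperColoring G C}.Nonempty := ⟨k0, C0, hC0.1⟩
  obtain ⟨Cp, hCp⟩ : ∃ C : Fin (chromNum G) → Set V, IsProperColoring G C :=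
    Nat.sInf_mem hPne
  -- combined coloring: singletons on S, plus the nonempty truncated classes
  let ι := ↥S ⊕ {i : Fin (chromNum G) // (Cp i \ ↑S).Nonempty}
  let D : ι → Set V := fun j => match j with
    | Sum.inl s => {(s : V)}
    | Sum.inr i => Cp i.1 \ ↑S
  have h1 : ∀ v, ∃! j, v ∈ D j := by
    intro v
    by_cases hv : v ∈ S
    · refine ⟨Sum.inl ⟨v, hv⟩, rfl, ?_⟩
      rintro (⟨s, hs⟩ | ⟨i, hi⟩) hj
      · have : v = s := hj
        subst this; rfl
      · exact absurd (show v ∈ (↑S : Set V) from hv) hj.2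
    · obtain ⟨i, hi, hun⟩ := hCp.1 v
      refine ⟨Sum.inr ⟨i, ⟨v, hi, hv⟩⟩, ⟨hi, hv⟩, ?_⟩
      rintro (⟨s, hs⟩ | ⟨i', hi'⟩) hj
      · have : v = s := hj
        exact absurd (this ▸ hs) hv
      · have : i' = i := hun i' hj.1
        subst this; rfl
  have h2 : ∀ j, (D j).Nonempty := by
    rintro (⟨s, hs⟩ | ⟨i, hi⟩)
    · exact ⟨s, rfl⟩
    · exact hi
  have h3 : ∀ j, ∀ u ∈ D j, ∀ w ∈ D j, ¬ G.Adj u w := by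
    rintro (⟨s, hs⟩ | ⟨i, hi⟩) u hu w hw
    · have hu' : u = s := hu
      have hw' : w = s := hw
      subst hu'; subst hw'; exact G.irrefl
    · exact hCp.2.2 i u hu.1 w hw.1
  have h4 : ∀ v, ∃ j, (D j).Nonempty ∧ ∀ u ∈ D j, G.Adj v u := by
    intro v
    obtain ⟨u, huS, hadj⟩ := hS v
    refine ⟨Sum.inl ⟨u, huS⟩, ⟨u, rfl⟩, fun w hw => ?_⟩
    have hw' : w = u := hw
    rwa [hw']
  obtain ⟨D', hD'⟩ := aux_tdc_card G D h1 h2 h3 h4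
  have hle : tdChromNum G ≤ Fintype.card ι := Nat.sInf_le ⟨D', hD'⟩
  have hcard : Fintype.card ι =
      S.card + Fintype.card {i : Fin (chromNum G) // (Cp i \ ↑S).Nonempty} := by
    simp [ι, Fintype.card_sum]
  have hsub : Fintype.card {i : Fin (chromNum G) // (Cp i \ ↑S).Nonempty} ≤ chromNum G := by
    simpa using Fintype.card_subtype_le (fun i : Fin (chromNum G) => (Cp i \ ↑S).Nonempty)
  refine ⟨max_le hchrom_le hdom_le, ?_⟩
  calc tdChromNum G ≤ Fintype.card ι := hle
    _ = S.card + Fintype.card {i : Fin (chromNum G) // (Cp i \ ↑S).Nonempty} := hcard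
    _ ≤ totalDomNum G + chromNum G := by
        rw [hScard] at *
        exact Nat.add_le_add le_rfl hsub
end

section
/- For every integer n ≥ 4, the total domination number of the Kneser graph KG(n,2) equals 6 if n = 4, equals 4 if n = 5, and equals 3 if n ≥ 6. -/
-- bridge
lemma tds_iff {n : ℕ} (S : Finset (KVert n)) :
    IsTotalDomSet (KG2 n) ↑S ↔ ∀ v : KVert n, ∃ u ∈ S, Disjoint v.1 u.1 := by
  simp [IsTotalDomSet, KG2]

-- n = 5 lower bound via counting
lemma deg5 : ∀ s : KVert 5, (Finset.univ.filter fun v : KVert 5 => Disjoint v.1 s.1).card = 3 := by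
  decide

lemma five_lb (S : Finset (KVert 5)) (h : ∀ v : KVert 5, ∃ u ∈ S, Disjoint v.1 u.1) :
    4 ≤ S.card := by
  by_contra hlt
  push_neg at hlt
  have hsub : (Finset.univ : Finset (KVert 5)) ⊆
      S.biUnion (fun s => Finset.univ.filter fun v : KVert 5 => Disjoint v.1 s.1) := by
    intro v _
    obtain ⟨u, hu, hadj⟩ := h v
    exact Finset.mem_biUnion.2 ⟨u, hu, Finset.mem_filter.2 ⟨Finset.mem_univ _, hadj⟩⟩
  have h1 := Finset.card_le_card hsub
  have h2 := Finset.card_biUnion_le (s := S)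
      (t := fun s => Finset.univ.filter fun v : KVert 5 => Disjoint v.1 s.1)
  have h3 : ∑ s ∈ S, (Finset.univ.filter fun v : KVert 5 => Disjoint v.1 s.1).card
      = 3 * S.card := by
    rw [Finset.sum_congr rfl fun s _ => deg5 s]
    simp [Finset.sum_const, Nat.mul_comm]
  have h4 : (Finset.univ : Finset (KVert 5)).card = 10 := by decide
  omega

def pr {n : ℕ} (a b : Fin n) (h : a ≠ b) : KVert n := ⟨{a, b}, Finset.card_pair h⟩

-- a 2-set cannot meet three pairwise disjoint sets
lemma meets3 {n : ℕ} (v p q r : Finset (Fin n)) (hv : v.card = 2)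
    (hpq : Disjoint p q) (hpr : Disjoint p r) (hqr : Disjoint q r)
    (h1 : ¬Disjoint v p) (h2 : ¬Disjoint v q) (h3 : ¬Disjoint v r) : False := by
  obtain ⟨a, hav, hap⟩ := Finset.not_disjoint_iff.1 h1
  obtain ⟨b, hbv, hbq⟩ := Finset.not_disjoint_iff.1 h2
  obtain ⟨c, hcv, hcr⟩ := Finset.not_disjoint_iff.1 h3
  have hab : a ≠ b := fun h => Finset.disjoint_left.1 hpq hap (h ▸ hbq)
  have hac : a ≠ c := fun h => Finset.disjoint_left.1 hpr hap (h ▸ hcr)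
  have hbc : b ≠ c := fun h => Finset.disjoint_left.1 hqr hbq (h ▸ hcr)
  have hsub : ({a, b, c} : Finset (Fin n)) ⊆ v := by
    intro x hx
    simp only [Finset.mem_insert, Finset.mem_singleton] at hx
    rcases hx with rfl | rfl | rfl <;> assumption
  have h3le : 3 ≤ v.card := by
    have : ({a, b, c} : Finset (Fin n)).card = 3 := by
      rw [Finset.card_insert_of_notMem (by simp [hab, hac]),
        Finset.card_pair hbc]
    calc 3 = ({a, b, c} : Finset (Fin n)).card := this.symm
      _ ≤ v.card := Finset.card_le_card hsub
  omega

-- general lower bound: any total dominating set has ≥ 3 elements (n ≥ 4)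
lemma lb3 {n : ℕ} (hn : 4 ≤ n) (S : Finset (KVert n))
    (h : ∀ v : KVert n, ∃ u ∈ S, Disjoint v.1 u.1) : 3 ≤ S.card := by
  by_contra hlt
  push_neg at hlt
  have h01 : (⟨0, by omega⟩ : Fin n) ≠ ⟨1, by omega⟩ := by
    simp [Fin.ext_iff]
  obtain ⟨s, hsS, -⟩ := h (pr _ _ h01)
  obtain ⟨u, huS, hsu⟩ := h s
  have hne : s ≠ u := by
    rintro rfl
    rw [disjoint_self] at hsu
    have := s.2
    simp [hsu] at this
  have hsub : ({s, u} : Finset (KVert n)) ⊆ S := by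
    intro x hx
    simp only [Finset.mem_insert, Finset.mem_singleton] at hx
    rcases hx with rfl | rfl <;> assumption
  have hS2 : S = {s, u} := by
    apply (Finset.eq_of_subset_of_card_le hsub ?_).symm
    rw [Finset.card_pair hne]; omega
  obtain ⟨x, hx⟩ : s.1.Nonempty := Finset.card_pos.1 (by rw [s.2]; omega)
  obtain ⟨y, hy⟩ : u.1.Nonempty := Finset.card_pos.1 (by rw [u.2]; omega)
  have hxy : x ≠ y := fun h => Finset.disjoint_left.1 hsu hx (h ▸ hy)
  obtain ⟨t, htS, hwt⟩ := h (pr x y hxy)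
  rw [hS2] at htS
  simp only [Finset.mem_insert, Finset.mem_singleton] at htS
  rcases htS with rfl | rfl
  · exact Finset.disjoint_left.1 hwt (by simp [pr]) hx
  · exact Finset.disjoint_left.1 hwt (by simp [pr]) hy

-- upper bound 3 for n ≥ 6
lemma ub3 {n : ℕ} (hn : 6 ≤ n) : ∃ S : Finset (KVert n),
    (∀ v : KVert n, ∃ u ∈ S, Disjoint v.1 u.1) ∧ S.card = 3 := by
  have d01 : (⟨0, by omega⟩ : Fin n) ≠ ⟨1, by omega⟩ := by simp [Fin.ext_iff]
  have d23 : (⟨2, by omega⟩ : Fin n) ≠ ⟨3, by omega⟩ := by simp [Fin.ext_iff]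
  have d45 : (⟨4, by omega⟩ : Fin n) ≠ ⟨5, by omega⟩ := by simp [Fin.ext_iff]
  set p := pr _ _ d01 with hp
  set q := pr _ _ d23 with hq
  set r := pr _ _ d45 with hr
  have hpq : Disjoint p.1 q.1 := by
    simp [hp, hq, pr, Finset.disjoint_left, Fin.ext_iff]
    omega
  have hpr : Disjoint p.1 r.1 := by
    simp [hp, hr, pr, Finset.disjoint_left, Fin.ext_iff]
    omega
  have hqr : Disjoint q.1 r.1 := by
    simp [hq, hr, pr, Finset.disjoint_left, Fin.ext_iff]
    omega
  have hpq' : p ≠ q := by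
    rintro h
    have : p.1 = q.1 := congrArg _ h
    rw [this, disjoint_self] at hpq
    have := q.2; simp [hpq] at this
  have hpr' : p ≠ r := by
    rintro h
    have : p.1 = r.1 := congrArg _ h
    rw [this, disjoint_self] at hpr
    have := r.2; simp [hpr] at this
  have hqr' : q ≠ r := by
    rintro h
    have : q.1 = r.1 := congrArg _ h
    rw [this, disjoint_self] at hqr
    have := r.2; simp [hqr] at this
  refine ⟨{p, q, r}, ?_, ?_⟩
  · intro v
    by_cases h1 : Disjoint v.1 p.1
    · exact ⟨p, by simp, h1⟩
    by_cases h2 : Disjoint v.1 q.1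
    · exact ⟨q, by simp, h2⟩
    by_cases h3 : Disjoint v.1 r.1
    · exact ⟨r, by simp, h3⟩
    exact absurd (meets3 v.1 p.1 q.1 r.1 v.2 hpq hpr hqr h1 h2 h3) (fun h => h)
  · rw [Finset.card_insert_of_notMem (by simp [hpq', hpr']), Finset.card_pair hqr']


set_option maxRecDepth 10000 in
lemma four_lb : ∀ S : Finset (KVert 4),
    (∀ v : KVert 4, ∃ u ∈ S, Disjoint v.1 u.1) → 6 ≤ S.card := by decide

set_option maxRecDepth 10000 in
lemma four_ub : (∀ v : KVert 4, ∃ u ∈ (Finset.univ : Finset (KVert 4)), Disjoint v.1 u.1)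
    ∧ (Finset.univ : Finset (KVert 4)).card = 6 := by decide

def S5 : Finset (KVert 5) := Finset.univ.filter
  (fun v => v.1 = {0, 1} ∨ v.1 = {2, 3} ∨ v.1 = {2, 4} ∨ v.1 = {3, 4})

set_option maxRecDepth 10000 in
lemma five_ub : (∀ v : KVert 5, ∃ u ∈ S5, Disjoint v.1 u.1) ∧ S5.card = 4 := by decide

lemma key {n : ℕ} (m : ℕ)
    (hlb : ∀ S : Finset (KVert n), (∀ v : KVert n, ∃ u ∈ S, Disjoint v.1 u.1) → m ≤ S.card)
    (hub : ∃ S : Finset (KVert n), (∀ v : KVert n, ∃ u ∈ S, Disjoint v.1 u.1) ∧ S.card = m) :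
    totalDomNum (KG2 n) = m := by
  obtain ⟨S, hS, hc⟩ := hub
  unfold totalDomNum
  apply le_antisymm
  · exact Nat.sInf_le ⟨S, (tds_iff S).2 hS, hc⟩
  · refine le_csInf ⟨m, S, (tds_iff S).2 hS, hc⟩ ?_
    rintro k ⟨T, hT, rfl⟩
    exact hlb T ((tds_iff T).1 hT)

/-- For every `n ≥ 4`, the total domination number of `KG(n,2)` is
`6` if `n = 4`, `4` if `n = 5`, and `3` if `n ≥ 6`. -/
theorem stmt1 (n : ℕ) (hn : 4 ≤ n) :
    totalDomNum (KG2 n) = if n = 4 then 6 else if n = 5 then 4 else 3 := by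
  by_cases h4 : n = 4
  · subst h4
    simp only [if_pos rfl]
    exact key 6 four_lb ⟨Finset.univ, four_ub.1, four_ub.2⟩
  by_cases h5 : n = 5
  · subst h5
    norm_num
    exact key 4 five_lb ⟨S5, five_ub.1, five_ub.2⟩
  · rw [if_neg h4, if_neg h5]
    exact key 3 (fun S hS => lb3 hn S hS) (ub3 (by omega))
end

section
/- For every integer n ≥ 6, n − 2 ≤ χ_td(KG(n,2)) ≤ n + 1. -/
lemma pair_of_mem {n : ℕ} (v : KVert n) {x : Fin n} (hx : x ∈ v.1) :
    ∃ y, y ≠ x ∧ v.1 = {x, y} := by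
  obtain ⟨a,b,hab,hv⟩ := Finset.card_eq_two.mp v.2
  rw [hv] at hx ⊢
  simp at hx
  rcases hx with rfl|rfl
  · exact ⟨b, hab.symm, rfl⟩
  · exact ⟨a, hab, by rw [Finset.pair_comm]⟩

lemma indep_structure {n : ℕ} (hn : 6 ≤ n) (A : Set (KVert n))
    (hA : ∀ u ∈ A, ∀ w ∈ A, ¬ Disjoint u.1 w.1) :
    (∃ a : Fin n, ∀ v ∈ A, a ∈ v.1) ∨
    (∃ T : Finset (Fin n), T.card ≤ 3 ∧ ∀ v ∈ A, v.1 ⊆ T) := by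
  by_cases hne : ∃ u, u ∈ A
  · obtain ⟨u, hu⟩ := hne
    obtain ⟨a, b, hab, hu1⟩ := Finset.card_eq_two.mp u.2
    by_cases ha : ∀ v ∈ A, a ∈ v.1
    · exact Or.inl ⟨a, ha⟩
    push_neg at ha
    obtain ⟨w, hw, haw⟩ := ha
    -- w meets u, doesn't contain a, so contains b
    obtain ⟨x, hxw, hxu⟩ := Finset.not_disjoint_iff.mp (hA w hw u hu)
    rw [hu1] at hxu; simp at hxu
    have hbw : b ∈ w.1 := by
      rcases hxu with rfl|rfl
      · exact absurd hxw haw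
      · exact hxw
    obtain ⟨c, hcb, hw1⟩ := pair_of_mem w hbw
    have hca : c ≠ a := by rintro rfl; exact haw (by rw [hw1]; simp)
    by_cases hb : ∀ v ∈ A, b ∈ v.1
    · exact Or.inl ⟨b, hb⟩
    push_neg at hb
    obtain ⟨z, hz, hbz⟩ := hb
    have haz : a ∈ z.1 := by
      obtain ⟨x, hxz, hxu⟩ := Finset.not_disjoint_iff.mp (hA z hz u hu)
      rw [hu1] at hxu; simp at hxu
      rcases hxu with rfl|rfl
      · exact hxz
      · exact absurd hxz hbz
    have hcz : c ∈ z.1 := by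
      obtain ⟨x, hxz, hxw⟩ := Finset.not_disjoint_iff.mp (hA z hz w hw)
      rw [hw1] at hxw; simp at hxw
      rcases hxw with rfl|rfl
      · exact absurd hxz hbz
      · exact hxz
    have hz1 : z.1 = {a, c} := by
      apply (Finset.eq_of_subset_of_card_le _ _).symm
      · intro x hx; simp at hx; rcases hx with rfl|rfl <;> assumption
      · rw [z.2, Finset.card_pair (Ne.symm hca)]
    refine Or.inr ⟨{a, b, c}, ?_, ?_⟩
    · apply le_trans (Finset.card_insert_le _ _)
      simp [Finset.card_insert_le, Nat.succ_le_succ]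
      exact lt_of_le_of_lt (Finset.card_insert_le _ _) (by simp)
    · intro v hv x hxv
      by_contra hxabc
      simp at hxabc
      obtain ⟨hxa, hxb, hxc⟩ := hxabc
      obtain ⟨y, hyx, hv1⟩ := pair_of_mem v hxv
      -- v meets u, w, z; the meeting element can't be x, so it's y.
      have hy1 : y ∈ u.1 := by
        obtain ⟨e, hev, heu⟩ := Finset.not_disjoint_iff.mp (hA v hv u hu)
        rw [hv1] at hev; simp at hev
        rcases hev with rfl|rfl
        · rw [hu1] at heu; simp at heu; rcases heu with rfl|rfl
          · exact absurd rfl hxa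
          · exact absurd rfl hxb
        · exact heu
      have hy2 : y ∈ w.1 := by
        obtain ⟨e, hev, heu⟩ := Finset.not_disjoint_iff.mp (hA v hv w hw)
        rw [hv1] at hev; simp at hev
        rcases hev with rfl|rfl
        · rw [hw1] at heu; simp at heu; rcases heu with rfl|rfl
          · exact absurd rfl hxb
          · exact absurd rfl hxc
        · exact heu
      have hy3 : y ∈ z.1 := by
        obtain ⟨e, hev, heu⟩ := Finset.not_disjoint_iff.mp (hA v hv z hz)
        rw [hv1] at hev; simp at hev
        rcases hev with rfl|rfl
        · rw [hz1] at heu; simp at heu; rcases heu with rfl|rfl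
          · exact absurd rfl hxa
          · exact absurd rfl hxc
        · exact heu
      rw [hu1] at hy1; rw [hw1] at hy2; rw [hz1] at hy3
      simp at hy1 hy2 hy3
      rcases hy1 with h1|h1
      · rcases hy2 with h2|h2
        · exact hab (h1.symm.trans h2)
        · exact hca (h2.symm.trans h1)
      · rcases hy3 with h3|h3
        · exact hab (h3.symm.trans h1)
        · exact hcb (h3.symm.trans h1)
  · push_neg at hne
    exact Or.inl ⟨⟨0, by omega⟩, fun v hv => absurd hv (hne v)⟩

lemma two_mul_choose_two : ∀ m : ℕ, 2 * Nat.choose (m+2) 2 = (m+2)*(m+1) := by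
  intro m; induction m with
  | zero => rfl
  | succ m ih =>
    have h : Nat.choose (m+3) 2 = Nat.choose (m+2) 1 + Nat.choose (m+2) 2 :=
      Nat.choose_succ_succ _ _
    rw [show m+1+2 = m+3 by ring, h, Nat.choose_one_right, Nat.mul_add, ih]; ring

lemma lower_bound {n k : ℕ} (hn : 6 ≤ n) (C : Fin k → Set (KVert n))
    (hC : IsProperColoring (KG2 n) C) : n - 2 ≤ k := by
  classical
  obtain ⟨huniq, hnonempty, hindep⟩ := hC
  by_contra hk
  push_neg at hk
  have hk3 : k ≤ n - 3 := by omega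
  have hA : ∀ i, ∀ u ∈ C i, ∀ w ∈ C i, ¬ Disjoint u.1 w.1 := by
    intro i u hu w hw
    exact hindep i u hu w hw
  have hstruct := fun i => indep_structure hn (C i) (hA i)
  set P : Fin k → Prop := fun i => ∃ a : Fin n, ∀ v ∈ C i, a ∈ v.1 with hP
  set Q : Fin k → Prop := fun i => ∃ T : Finset (Fin n), T.card ≤ 3 ∧ ∀ v ∈ C i, v.1 ⊆ T with hQ
  set St : Finset (Fin k) := Finset.univ.filter P with hSt
  set g : Fin k → Fin n := fun i => if h : P i then h.choose else ⟨0, by omega⟩ with hg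
  set S : Finset (Fin n) := St.image g with hS
  set T : Fin k → Finset (Fin n) := fun i => if h : Q i then h.choose else ∅ with hT
  have hTspec : ∀ i ∉ St, (T i).card ≤ 3 ∧ ∀ v ∈ C i, v.1 ⊆ T i := by
    intro i hi
    have hnp : ¬ P i := by
      intro hp; exact hi (Finset.mem_filter.mpr ⟨Finset.mem_univ _, hp⟩)
    have hq : Q i := (hstruct i).resolve_left hnp
    simp only [hT, dif_pos hq]
    exact hq.choose_spec
  set W : Finset (Finset (Fin n)) := Finset.powersetCard 2 (Finset.univ \ S) with hW
  have hsub : W ⊆ (Finset.univ \ St).biUnion (fun i => Finset.powersetCard 2 (T i)) := by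
    intro p hp
    obtain ⟨hpsub, hpcard⟩ := Finset.mem_powersetCard.mp hp
    set v : KVert n := ⟨p, hpcard⟩ with hv
    obtain ⟨i, hvi, -⟩ := huniq v
    have hiSt : i ∉ St := by
      intro hiSt
      have hpi : P i := (Finset.mem_filter.mp hiSt).2
      have hgi : g i ∈ v.1 := by
        simp only [hg, dif_pos hpi]
        exact hpi.choose_spec v hvi
      have hgiS : g i ∈ S := Finset.mem_image.mpr ⟨i, hiSt, rfl⟩
      have := hpsub hgi
      simp at this
      exact this hgiS
    refine Finset.mem_biUnion.mpr ⟨i, by simp [hiSt], ?_⟩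
    exact Finset.mem_powersetCard.mpr ⟨(hTspec i hiSt).2 v hvi, hpcard⟩
  have hWcard : W.card = Nat.choose (Finset.univ \ S).card 2 := by
    rw [hW, Finset.card_powersetCard]
  have hScard : S.card ≤ St.card := Finset.card_image_le
  have hsdiff : (Finset.univ \ S).card = n - S.card := by
    rw [Finset.card_sdiff_of_subset (Finset.subset_univ _), Finset.card_univ, Fintype.card_fin]
  have hbi : ((Finset.univ \ St).biUnion (fun i => Finset.powersetCard 2 (T i))).card
      ≤ 3 * (Finset.univ \ St).card := by
    apply le_trans (Finset.card_biUnion_le)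
    calc ∑ a ∈ Finset.univ \ St, (Finset.powersetCard 2 (T a)).card
        ≤ ∑ _a ∈ Finset.univ \ St, 3 := by
          apply Finset.sum_le_sum
          intro i hi
          rw [Finset.card_powersetCard]
          calc Nat.choose (T i).card 2 ≤ Nat.choose 3 2 :=
                Nat.choose_le_choose 2 (hTspec i (by simp at hi; simpa using hi)).1
            _ = 3 := by decide
      _ = 3 * (Finset.univ \ St).card := by rw [Finset.sum_const, smul_eq_mul, Nat.mul_comm]
  have hdST : (Finset.univ \ St).card = k - St.card := by
    rw [Finset.card_sdiff_of_subset (Finset.subset_univ _), Finset.card_univ, Fintype.card_fin]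
  have key : Nat.choose (n - St.card) 2 ≤ 3 * (k - St.card) := by
    calc Nat.choose (n - St.card) 2 ≤ Nat.choose (n - S.card) 2 :=
          Nat.choose_le_choose 2 (Nat.sub_le_sub_left hScard n)
      _ = W.card := by rw [hWcard, hsdiff]
      _ ≤ ((Finset.univ \ St).biUnion (fun i => Finset.powersetCard 2 (T i))).card :=
          Finset.card_le_card hsub
      _ ≤ 3 * (Finset.univ \ St).card := hbi
      _ = 3 * (k - St.card) := by rw [hdST]
  have hsk : St.card ≤ k := by
    calc St.card ≤ (Finset.univ : Finset (Fin k)).card := Finset.card_filter_le _ _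
      _ = k := by rw [Finset.card_univ, Fintype.card_fin]
  obtain ⟨m', hm'⟩ : ∃ m', n - St.card = m' + 3 := ⟨n - St.card - 3, by omega⟩
  rw [hm'] at key
  have h2 := two_mul_choose_two (m'+1)
  rw [show m'+1+2 = m'+3 by ring] at h2
  have hks : k - St.card ≤ m' := by omega
  have hfin : (m'+3)*(m'+2) ≤ 6 * m' := by
    calc (m'+3)*(m'+2) = 2 * Nat.choose (m'+3) 2 := h2.symm
      _ ≤ 2 * (3 * (k - St.card)) := by omega
      _ ≤ 2 * (3 * m') := by omega
      _ = 6 * m' := by ring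
  have hexp : (m'+3)*(m'+2) = m'*m' + 5*m' + 6 := by ring
  have hle : m' ≤ m'*m' := by
    rcases Nat.eq_zero_or_pos m' with h|h
    · simp [h]
    · exact Nat.le_mul_of_pos_left m' h
  have hfin2 : m'*m' + 5*m' + 6 ≤ 6*m' := by rw [← hexp]; exact hfin
  omega

/-- minimum element of a vertex -/
def mvF {n : ℕ} (v : KVert n) : Fin n :=
  v.1.min' (Finset.card_pos.mp (by rw [v.2]; norm_num))

lemma mvF_mem {n : ℕ} (v : KVert n) : mvF v ∈ v.1 := Finset.min'_mem _ _
lemma mvF_le {n : ℕ} (v : KVert n) {x : Fin n} (hx : x ∈ v.1) : mvF v ≤ x :=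
  Finset.min'_le _ _ hx

lemma mvF_pair {n : ℕ} {a b : ℕ} (ha : a < n) (hb : b < n) (hab : a < b) (v : KVert n)
    (hv : v.1 = {⟨a,ha⟩, ⟨b,hb⟩}) : (mvF v).val = a := by
  have h1 : mvF v ∈ v.1 := mvF_mem v
  have h2 : mvF v ≤ ⟨a, ha⟩ := mvF_le v (by rw [hv]; simp)
  rw [hv] at h1; simp at h1
  rcases h1 with h|h
  · rw [h]
  · exfalso; rw [h] at h2; rw [Fin.le_def] at h2; simp at h2; omega

lemma pair_gap_ne {n : ℕ} {m c : ℕ} (hm : m < n) (hm2 : m+2 < n) (hc : c < n)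
    (hc1 : c+1 < n) :
    ({⟨m,hm⟩, ⟨m+2,hm2⟩} : Finset (Fin n)) ≠ {⟨c,hc⟩, ⟨c+1,hc1⟩} := by
  intro h
  have h1 : (⟨m,hm⟩ : Fin n) ∈ ({⟨c,hc⟩, ⟨c+1,hc1⟩} : Finset (Fin n)) :=
    h ▸ Finset.mem_insert_self _ _
  have h2 : (⟨m+2,hm2⟩ : Fin n) ∈ ({⟨c,hc⟩, ⟨c+1,hc1⟩} : Finset (Fin n)) :=
    h ▸ (by simp)
  simp [Fin.ext_iff] at h1 h2
  omega

lemma not_disjoint_of_mem {n : ℕ} {u w : KVert n} {x : Fin n} (hx : x ∈ u.1)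
    (hy : x ∈ w.1) : ¬ Disjoint u.1 w.1 :=
  fun hd => (Finset.disjoint_left.mp hd hx) hy

lemma not_disjoint_of_eq {n : ℕ} {u w : KVert n} (h : u.1 = w.1) : ¬ Disjoint u.1 w.1 := by
  intro hd
  rw [h, disjoint_self] at hd
  have := w.2
  simp [hd] at this

/-- the coloring function -/
def colorFn (n : ℕ) (hn : 6 ≤ n) (v : KVert n) : Fin (n+1) :=
  if v.1 = {⟨0, by omega⟩, ⟨1, by omega⟩} then ⟨0, by omega⟩
  else if v.1 = {⟨2, by omega⟩, ⟨3, by omega⟩} then ⟨1, by omega⟩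
  else if v.1 = {⟨4, by omega⟩, ⟨5, by omega⟩} then ⟨2, by omega⟩
  else if h : (mvF v).val ≤ n - 4 then ⟨3 + (mvF v).val, by omega⟩
  else ⟨n, by omega⟩

lemma high_case {n : ℕ} (hn : 6 ≤ n) (u w : KVert n) (hu : n-4 < (mvF u).val)
    (hw : n-4 < (mvF w).val) : ¬ Disjoint u.1 w.1 := by
  intro hd
  set R : Finset (Fin n) := {⟨n-3, by omega⟩, ⟨n-2, by omega⟩, ⟨n-1, by omega⟩} with hR
  have hsub : u.1 ∪ w.1 ⊆ R := by
    intro x hx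
    have hge : n - 3 ≤ x.val := by
      rcases Finset.mem_union.mp hx with h|h
      · have h2 := mvF_le u h; rw [Fin.le_def] at h2; omega
      · have h2 := mvF_le w h; rw [Fin.le_def] at h2; omega
    have hlt : x.val < n := x.2
    simp only [hR, Finset.mem_insert, Finset.mem_singleton, Fin.ext_iff]
    omega
  have hcard : (u.1 ∪ w.1).card = 4 := by
    rw [Finset.card_union_of_disjoint hd, u.2, w.2]
  have h1 : (u.1 ∪ w.1).card ≤ R.card := Finset.card_le_card hsub
  have h2 : R.card ≤ 3 := by
    apply le_trans (Finset.card_insert_le _ _)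
    have := Finset.card_insert_le (⟨n-2, by omega⟩ : Fin n) ({⟨n-1, by omega⟩} : Finset (Fin n))
    simp at this ⊢
    omega
  omega

lemma same_color_not_disjoint {n : ℕ} (hn : 6 ≤ n) (u w : KVert n)
    (h : colorFn n hn u = colorFn n hn w) : ¬ Disjoint u.1 w.1 := by
  unfold colorFn at h
  split_ifs at h with h1 h2 h3 h4 h5 h6 h7 h8 h9 h10 h11 h12 h13 h14 h15 h16 h17 h18 h19 h20 <;>
    simp only [Fin.mk.injEq] at h <;>
    try omega
  all_goals try (exact not_disjoint_of_eq (by rw [‹u.1 = _›, ‹w.1 = _›]))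
  -- remaining: mid-mid and last-last
  · -- mid-mid: 3 + mv u = 3 + mv w
    have hm : mvF u = mvF w := Fin.ext (by omega)
    exact not_disjoint_of_mem (mvF_mem u) (hm ▸ mvF_mem w)
  · -- last-last
    exact high_case hn u w (by omega) (by omega)

lemma pair_ne_left {n : ℕ} {a b c d : ℕ} (ha : a < n) (hb : b < n) (hc : c < n)
    (hd : d < n) (h1 : a ≠ c) (h2 : a ≠ d) :
    ({⟨a,ha⟩, ⟨b,hb⟩} : Finset (Fin n)) ≠ {⟨c,hc⟩, ⟨d,hd⟩} := by
  intro h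
  have h3 : (⟨a,ha⟩ : Fin n) ∈ ({⟨c,hc⟩, ⟨d,hd⟩} : Finset (Fin n)) :=
    h ▸ Finset.mem_insert_self _ _
  simp [Fin.ext_iff] at h3
  omega

lemma colorFn_P0 {n : ℕ} (hn : 6 ≤ n) (v : KVert n)
    (hv : v.1 = {⟨0, by omega⟩, ⟨1, by omega⟩}) : colorFn n hn v = ⟨0, by omega⟩ := by
  unfold colorFn; rw [if_pos hv]

lemma colorFn_P1 {n : ℕ} (hn : 6 ≤ n) (v : KVert n)
    (hv : v.1 = {⟨2, by omega⟩, ⟨3, by omega⟩}) : colorFn n hn v = ⟨1, by omega⟩ := by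
  unfold colorFn
  rw [if_neg (by rw [hv]; exact pair_ne_left _ _ _ _ (by omega) (by omega)), if_pos hv]

lemma colorFn_P2 {n : ℕ} (hn : 6 ≤ n) (v : KVert n)
    (hv : v.1 = {⟨4, by omega⟩, ⟨5, by omega⟩}) : colorFn n hn v = ⟨2, by omega⟩ := by
  unfold colorFn
  rw [if_neg (by rw [hv]; exact pair_ne_left _ _ _ _ (by omega) (by omega)),
    if_neg (by rw [hv]; exact pair_ne_left _ _ _ _ (by omega) (by omega)), if_pos hv]

lemma colorFn_gap {n : ℕ} (hn : 6 ≤ n) {m : ℕ} (hm : m < n) (hm2 : m + 2 < n)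
    (v : KVert n) (hv : v.1 = {⟨m, hm⟩, ⟨m+2, hm2⟩}) :
    colorFn n hn v = if h : m ≤ n - 4 then ⟨3 + m, by omega⟩ else ⟨n, by omega⟩ := by
  have hmv : (mvF v).val = m := mvF_pair hm hm2 (by omega) v hv
  unfold colorFn
  rw [if_neg (by rw [hv]; exact pair_gap_ne _ _ _ (by omega)),
    if_neg (by rw [hv]; exact pair_gap_ne _ _ _ (by omega)),
    if_neg (by rw [hv]; exact pair_gap_ne _ _ _ (by omega))]
  by_cases h : m ≤ n - 4
  · rw [dif_pos (by omega), dif_pos h]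
    exact Fin.ext (by simp [hmv])
  · rw [dif_neg (by omega), dif_neg h]

lemma colorFn_eq0 {n : ℕ} (hn : 6 ≤ n) (v : KVert n)
    (h : colorFn n hn v = ⟨0, by omega⟩) : v.1 = {⟨0, by omega⟩, ⟨1, by omega⟩} := by
  unfold colorFn at h
  split_ifs at h with h1 h2 h3 h4 <;>
    first
      | exact h1
      | (exfalso; simp only [Fin.mk.injEq] at h; omega)

lemma colorFn_eq1 {n : ℕ} (hn : 6 ≤ n) (v : KVert n)
    (h : colorFn n hn v = ⟨1, by omega⟩) : v.1 = {⟨2, by omega⟩, ⟨3, by omega⟩} := by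
  unfold colorFn at h
  split_ifs at h with h1 h2 h3 h4 <;>
    first
      | exact h2
      | (exfalso; simp only [Fin.mk.injEq] at h; omega)

lemma colorFn_eq2 {n : ℕ} (hn : 6 ≤ n) (v : KVert n)
    (h : colorFn n hn v = ⟨2, by omega⟩) : v.1 = {⟨4, by omega⟩, ⟨5, by omega⟩} := by
  unfold colorFn at h
  split_ifs at h with h1 h2 h3 h4 <;>
    first
      | exact h3
      | (exfalso; simp only [Fin.mk.injEq] at h; omega)

lemma exists_disjoint_pair {n : ℕ} (hn : 6 ≤ n) (v : KVert n) :
    Disjoint v.1 ({⟨0, by omega⟩, ⟨1, by omega⟩} : Finset (Fin n)) ∨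
    Disjoint v.1 ({⟨2, by omega⟩, ⟨3, by omega⟩} : Finset (Fin n)) ∨
    Disjoint v.1 ({⟨4, by omega⟩, ⟨5, by omega⟩} : Finset (Fin n)) := by
  by_contra h
  push_neg at h
  obtain ⟨h0, h1, h2⟩ := h
  obtain ⟨x0, hx0v, hx0⟩ := Finset.not_disjoint_iff.mp h0
  obtain ⟨x1, hx1v, hx1⟩ := Finset.not_disjoint_iff.mp h1
  obtain ⟨x2, hx2v, hx2⟩ := Finset.not_disjoint_iff.mp h2
  simp [Fin.ext_iff] at hx0 hx1 hx2
  have hsub : ({x0, x1, x2} : Finset (Fin n)) ⊆ v.1 := by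
    intro x hx; simp at hx
    rcases hx with rfl|rfl|rfl <;> assumption
  have hcard : ({x0, x1, x2} : Finset (Fin n)).card = 3 := by
    rw [Finset.card_insert_of_notMem (by simp [Fin.ext_iff]; omega),
      Finset.card_insert_of_notMem (by simp [Fin.ext_iff]; omega),
      Finset.card_singleton]
  have := Finset.card_le_card hsub
  rw [v.2, hcard] at this
  omega

lemma upper_exists (n : ℕ) (hn : 6 ≤ n) :
    ∃ C : Fin (n+1) → Set (KVert n), IsTDColoring (KG2 n) C := by
  have hw0 : ∃ v : KVert n, v.1 = {⟨0, by omega⟩, ⟨1, by omega⟩} :=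
    ⟨⟨({⟨0, by omega⟩, ⟨1, by omega⟩} : Finset (Fin n)),
      Finset.card_pair (by simp [Fin.ext_iff])⟩, rfl⟩
  have hw1 : ∃ v : KVert n, v.1 = {⟨2, by omega⟩, ⟨3, by omega⟩} :=
    ⟨⟨({⟨2, by omega⟩, ⟨3, by omega⟩} : Finset (Fin n)),
      Finset.card_pair (by simp [Fin.ext_iff])⟩, rfl⟩
  have hw2 : ∃ v : KVert n, v.1 = {⟨4, by omega⟩, ⟨5, by omega⟩} :=
    ⟨⟨({⟨4, by omega⟩, ⟨5, by omega⟩} : Finset (Fin n)),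
      Finset.card_pair (by simp [Fin.ext_iff])⟩, rfl⟩
  refine ⟨fun i => {v | colorFn n hn v = i}, ⟨⟨?_, ?_, ?_⟩, ?_⟩⟩
  · intro v; exact ⟨colorFn n hn v, rfl, fun y hy => hy.symm⟩
  · -- nonempty classes
    intro i
    have hi := i.2
    rcases Nat.lt_or_ge i.val 3 with h3 | h3
    · interval_cases h : i.val
      · obtain ⟨v, hv⟩ := hw0
        exact ⟨v, by rw [Set.mem_setOf_eq, colorFn_P0 hn v hv]; exact Fin.ext (by simp [h])⟩
      · obtain ⟨v, hv⟩ := hw1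
        exact ⟨v, by rw [Set.mem_setOf_eq, colorFn_P1 hn v hv]; exact Fin.ext (by simp [h])⟩
      · obtain ⟨v, hv⟩ := hw2
        exact ⟨v, by rw [Set.mem_setOf_eq, colorFn_P2 hn v hv]; exact Fin.ext (by simp [h])⟩
    · rcases Nat.lt_or_ge i.val n with h4 | h4
      · -- mid color: i.val = 3 + m with m ≤ n - 4
        set m : ℕ := i.val - 3 with hm
        have hmn : m < n := by omega
        have hm2 : m + 2 < n := by omega
        refine ⟨⟨{⟨m, hmn⟩, ⟨m+2, hm2⟩}, Finset.card_pair (by simp [Fin.ext_iff])⟩, ?_⟩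
        rw [Set.mem_setOf_eq, colorFn_gap hn hmn hm2 _ rfl, dif_pos (by omega)]
        exact Fin.ext (by simp; omega)
      · -- last color: i.val = n
        have hin : i.val = n := by omega
        have hmn : n - 3 < n := by omega
        have hm2 : n - 3 + 2 < n := by omega
        have hne : (⟨n-3, hmn⟩ : Fin n) ≠ ⟨n-3+2, hm2⟩ := by simp [Fin.ext_iff]
        refine ⟨⟨{⟨n-3, hmn⟩, ⟨n-3+2, hm2⟩}, Finset.card_pair hne⟩, ?_⟩
        rw [Set.mem_setOf_eq, colorFn_gap hn hmn hm2 _ rfl, dif_neg (by omega)]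
        exact Fin.ext (by simp [hin])
  · -- independence
    intro i u hu w hw
    have h : colorFn n hn u = colorFn n hn w := hu.trans hw.symm
    exact fun hadj => same_color_not_disjoint hn u w h hadj
  · -- total domination
    intro v
    rcases exists_disjoint_pair hn v with h | h | h
    · obtain ⟨v0, hv0⟩ := hw0
      refine ⟨⟨0, by omega⟩, ⟨v0, colorFn_P0 hn v0 hv0⟩, fun u hu => ?_⟩
      have := colorFn_eq0 hn u hu
      show Disjoint v.1 u.1
      rw [this]; exact h
    · obtain ⟨v1, hv1⟩ := hw1
      refine ⟨⟨1, by omega⟩, ⟨v1, colorFn_P1 hn v1 hv1⟩, fun u hu => ?_⟩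
      have := colorFn_eq1 hn u hu
      show Disjoint v.1 u.1
      rw [this]; exact h
    · obtain ⟨v2, hv2⟩ := hw2
      refine ⟨⟨2, by omega⟩, ⟨v2, colorFn_P2 hn v2 hv2⟩, fun u hu => ?_⟩
      have := colorFn_eq2 hn u hu
      show Disjoint v.1 u.1
      rw [this]; exact h

/-- For every `n ≥ 6`, `n - 2 ≤ χ_td(KG(n,2)) ≤ n + 1`. -/
theorem stmt2 (n : ℕ) (hn : 6 ≤ n) :
    n - 2 ≤ tdChromNum (KG2 n) ∧ tdChromNum (KG2 n) ≤ n + 1 := by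
  have hub := upper_exists n hn
  have hne : {k | ∃ C : Fin k → Set (KVert n), IsTDColoring (KG2 n) C}.Nonempty := ⟨n+1, hub⟩
  unfold tdChromNum
  constructor
  · obtain ⟨C, hC⟩ := Nat.sInf_mem hne
    exact lower_bound hn C hC.1
  · exact Nat.sInf_le hub
end

section
/- Let n ≥ 4 and k ≥ n − 2, and let f = (V_1, …, V_k) be a proper coloring of the Kneser graph KG(n,2) with k nonempty color classes. If there exists a symbol i ∈ {1,2,…,n} that appears in at least k − 1 of the color classes (i.e., at least k − 1 classes contain a vertex {i,j} for some j), then f is not a total dominator coloring. -/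
/-- Let `n ≥ 4`, `k ≥ n - 2`, and let `C` be a proper coloring of
`KG(n,2)` with `k` nonempty color classes. If some symbol `i` appears in at least
`k - 1` of the color classes, then `C` is not a total dominator coloring. -/
theorem stmt3 (n k : ℕ) (hn : 4 ≤ n) (hk : n - 2 ≤ k)
    (C : Fin k → Set (KVert n)) (hC : IsProperColoring (KG2 n) C)
    (i : Fin n)
    (hi : k - 1 ≤ {j : Fin k | ∃ v ∈ C j, i ∈ v.1}.ncard) :
    ¬ IsTDColoring (KG2 n) C := by
  intro hTDC
  obtain ⟨⟨hpart, hne, hind⟩, hDom⟩ := hTDC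
  set S := {j : Fin k | ∃ v ∈ C j, i ∈ v.1} with hSdef
  -- Any class that totally dominates a vertex containing i must lie outside S
  have key : ∀ (v : KVert n), i ∈ v.1 → ∀ m : Fin k,
      (∀ u ∈ C m, (KG2 n).Adj v u) → m ∉ S := by
    intro v hv m hm hmS
    obtain ⟨w, hwC, hwi⟩ := hmS
    have hadj := hm w hwC
    have : Disjoint v.1 w.1 := hadj
    exact (Set.disjoint_left.mp (Finset.disjoint_coe.mpr this)) hv hwi
  -- At most one class outside S
  have huniq : ∀ m1 m2 : Fin k, m1 ∉ S → m2 ∉ S → m1 = m2 := by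
    intro m1 m2 h1 h2
    by_contra hne12
    have hsub : ({m1, m2} : Set (Fin k)) ⊆ Sᶜ := by
      intro x hx
      rcases hx with rfl | rfl
      · exact h1
      · exact h2
    have h2le : 2 ≤ Sᶜ.ncard := by
      have := Set.ncard_le_ncard hsub (Set.toFinite _)
      rwa [Set.ncard_pair hne12] at this
    have hsum : S.ncard + Sᶜ.ncard = k := by
      have := Set.ncard_add_ncard_compl S
      simpa [Nat.card_eq_fintype_card] using this
    omega
  -- a symbol different from i
  have hn2 : 2 ≤ n := by omega
  obtain ⟨a, ha⟩ : ∃ a : Fin n, a ≠ i := by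
    haveI : Nontrivial (Fin n) := Fin.nontrivial_iff_two_le.mpr hn2
    exact exists_ne i
  have hcard : ∀ b : Fin n, b ≠ i → ({i, b} : Finset (Fin n)).card = 2 := by
    intro b hb
    rw [Finset.card_pair (Ne.symm hb)]
  -- dominating class for {i, a}
  obtain ⟨m0, hm0ne, hm0⟩ := hDom ⟨{i, a}, hcard a ha⟩
  have hm0S : m0 ∉ S := key _ (by simp) m0 hm0
  obtain ⟨u, huC⟩ := hm0ne
  obtain ⟨c, hc⟩ : ∃ c, c ∈ u.1 := Finset.card_pos.mp (by rw [u.2]; omega)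
  have hci : c ≠ i := by
    intro h
    exact hm0S ⟨u, huC, h ▸ hc⟩
  -- dominating class for {i, c} must also be m0
  obtain ⟨m1, hm1ne, hm1⟩ := hDom ⟨{i, c}, hcard c hci⟩
  have hm1S : m1 ∉ S := key _ (by simp) m1 hm1
  have : m1 = m0 := huniq m1 m0 hm1S hm0S
  subst this
  have hadj := hm1 u huC
  have hdisj : Disjoint ({i, c} : Finset (Fin n)) u.1 := hadj
  exact (Finset.disjoint_right.mp hdisj hc) (by simp)
end

section
/- For every integer n ≥ 5, every proper coloring of the Kneser graph KG(n,2) with exactly n − 2 nonempty color classes contains exactly one triangular color class, i.e., exactly one color class of the form {{a,b},{a,c},{b,c}} for distinct a,b,c ∈ {1,…,n}. -/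
lemma pair_subset_triple {α : Type*} [DecidableEq α] {s : Finset α} {a b c : α}
    (hpq' : a ≠ b) (hs : s.card = 2) (hsub : s ⊆ ({a,b,c} : Finset α)) :
    s = {a,b} ∨ s = {a,c} ∨ s = {b,c} := by
  obtain ⟨p, q, hpq, rfl⟩ := Finset.card_eq_two.mp hs
  have hp : p = a ∨ p = b ∨ p = c := by
    have := hsub (Finset.mem_insert_self p {q}); simpa using this
  have hq : q = a ∨ q = b ∨ q = c := by
    have := hsub (by simp : q ∈ ({p,q} : Finset α)); simpa using this
  rcases hp with rfl|rfl|rfl <;> rcases hq with rfl|rfl|rfl <;>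
    simp_all [Finset.pair_comm, Finset.Subset.antisymm_iff, Finset.insert_subset_iff]

lemma star_or_tri {n : ℕ} (A : Set (KVert n)) (hne : A.Nonempty)
    (hint : ∀ u ∈ A, ∀ w ∈ A, ¬ Disjoint u.1 w.1) :
    Starlike A ∨ Triangular A := by
  obtain ⟨u, hu⟩ := hne
  obtain ⟨a, b, hab, hu1⟩ := Finset.card_eq_two.mp u.2
  by_cases hA : ∀ v ∈ A, a ∈ v.1
  · exact Or.inl ⟨a, hA⟩
  push_neg at hA
  obtain ⟨w, hw, haw⟩ := hA
  -- w meets u, so b ∈ w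
  have hbw : b ∈ w.1 := by
    obtain ⟨x, hxw, hxu⟩ := Finset.not_disjoint_iff.mp (hint w hw u hu)
    rw [hu1] at hxu
    rcases Finset.mem_insert.mp hxu with rfl | hx
    · exact absurd hxw haw
    · rwa [Finset.mem_singleton.mp hx] at hxw
  obtain ⟨c, hcw, hcb, hw1⟩ : ∃ c, c ∈ w.1 ∧ c ≠ b ∧ w.1 = {b, c} := by
    obtain ⟨p, q, hpq, hw1⟩ := Finset.card_eq_two.mp w.2
    rw [hw1] at hbw
    rcases Finset.mem_insert.mp hbw with rfl | hb
    · exact ⟨q, by simp [hw1], hpq.symm, hw1⟩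
    · rw [Finset.mem_singleton] at hb
      subst hb
      exact ⟨p, by simp [hw1], hpq, by rw [hw1, Finset.pair_comm]⟩
  have hca : c ≠ a := by rintro rfl; exact haw hcw
  by_cases hB : ∀ v ∈ A, b ∈ v.1
  · exact Or.inl ⟨b, hB⟩
  push_neg at hB
  obtain ⟨z, hz, hbz⟩ := hB
  -- z meets u → a ∈ z; z meets w → c ∈ z
  have haz : a ∈ z.1 := by
    obtain ⟨x, hxz, hxu⟩ := Finset.not_disjoint_iff.mp (hint z hz u hu)
    rw [hu1] at hxu
    rcases Finset.mem_insert.mp hxu with rfl | hx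
    · exact hxz
    · rw [Finset.mem_singleton] at hx
      subst hx
      exact absurd hxz hbz
  have hcz : c ∈ z.1 := by
    obtain ⟨x, hxz, hxw⟩ := Finset.not_disjoint_iff.mp (hint z hz w hw)
    rw [hw1] at hxw
    rcases Finset.mem_insert.mp hxw with rfl | hx
    · exact absurd hxz hbz
    · rw [Finset.mem_singleton] at hx
      subst hx
      exact hxz
  have hz1 : z.1 = {a, c} := by
    refine (Finset.eq_of_subset_of_card_le ?_ ?_).symm
    · intro x hx
      rcases Finset.mem_insert.mp hx with rfl | hx
      · exact haz
      · exact Finset.mem_singleton.mp hx ▸ hcz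
    · simp [z.2, Finset.card_pair hca.symm]
  refine Or.inr ⟨a, b, c, hab, hca.symm, fun h => hcb h.symm, ?_⟩
  ext v
  simp only [Set.mem_setOf_eq]
  constructor
  · intro hv
    have hsub : v.1 ⊆ {a, b, c} := by
      intro x hx
      by_contra hxout
      simp only [Finset.mem_insert, Finset.mem_singleton, not_or] at hxout
      obtain ⟨hxa, hxb, hxc⟩ := hxout
      -- v = {x, y}; y must meet all three pairs
      obtain ⟨p, q, hpq, hv1⟩ := Finset.card_eq_two.mp v.2
      have hy : ∃ y, v.1 = {x, y} ∧ y ≠ x := by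
        rw [hv1] at hx ⊢
        rcases Finset.mem_insert.mp hx with h | h
        · subst h
          exact ⟨q, rfl, hpq.symm⟩
        · rw [Finset.mem_singleton] at h
          subst h
          exact ⟨p, Finset.pair_comm p x, hpq⟩
      obtain ⟨y, hvxy, hyx⟩ := hy
      have meet : ∀ s : Finset (Fin n), (∀ t ∈ A, ¬ Disjoint v.1 t.1) → True := fun _ _ => trivial
      have m1 := Finset.not_disjoint_iff.mp (hint v hv u hu)
      have m2 := Finset.not_disjoint_iff.mp (hint v hv w hw)
      have m3 := Finset.not_disjoint_iff.mp (hint v hv z hz)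
      have hya : y ∈ ({a,b} : Finset (Fin n)) := by
        obtain ⟨e, hev, heu⟩ := m1
        rw [hu1] at heu; rw [hvxy] at hev
        rcases Finset.mem_insert.mp hev with rfl | he
        · exact absurd heu (by simp [hxa, hxb])
        · exact Finset.mem_singleton.mp he ▸ heu
      have hyb : y ∈ ({b,c} : Finset (Fin n)) := by
        obtain ⟨e, hev, heu⟩ := m2
        rw [hw1] at heu; rw [hvxy] at hev
        rcases Finset.mem_insert.mp hev with rfl | he
        · exact absurd heu (by simp [hxb, hxc])
        · exact Finset.mem_singleton.mp he ▸ heu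
      have hyc : y ∈ ({a,c} : Finset (Fin n)) := by
        obtain ⟨e, hev, heu⟩ := m3
        rw [hz1] at heu; rw [hvxy] at hev
        rcases Finset.mem_insert.mp hev with rfl | he
        · exact absurd heu (by simp [hxa, hxc])
        · exact Finset.mem_singleton.mp he ▸ heu
      simp only [Finset.mem_insert, Finset.mem_singleton] at hya hyb hyc
      rcases hya with h1 | h1
      · rcases hyb with h2 | h2
        · exact hab (h1.symm.trans h2)
        · exact hca (h1.symm.trans h2).symm
      · rcases hyc with h2 | h2
        · exact hab (h2.symm.trans h1)
        · exact hcb (h2.symm.trans h1)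
    exact pair_subset_triple hab v.2 hsub
  · intro hv
    rcases hv with h | h | h
    · have : v = u := Subtype.ext (h.trans hu1.symm)
      exact this ▸ hu
    · have : v = z := Subtype.ext (h.trans hz1.symm)
      exact this ▸ hz
    · have : v = w := Subtype.ext (h.trans hw1.symm)
      exact this ▸ hw


/-- For every `n ≥ 5`, every proper coloring of `KG(n,2)` with
exactly `n - 2` nonempty color classes has exactly one triangular color class. -/
theorem stmt4 (n : ℕ) (hn : 5 ≤ n)
    (C : Fin (n - 2) → Set (KVert n)) (hC : IsProperColoring (KG2 n) C) :
    ∃! i : Fin (n - 2), Triangular (C i) := by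
  classical
  obtain ⟨huniq, hne, hind⟩ := hC
  have hint : ∀ i, ∀ u ∈ C i, ∀ w ∈ C i, ¬ Disjoint u.1 w.1 :=
    fun i u hu w hw => hind i u hu w hw
  have hst : ∀ i, Starlike (C i) ∨ Triangular (C i) := fun i => star_or_tri _ (hne i) (hint i)
  set Tri : Finset (Fin (n-2)) := Finset.univ.filter (fun i => Triangular (C i)) with hTridef
  have hTriMem : ∀ i, i ∈ Tri ↔ Triangular (C i) := by
    intro i; rw [hTridef]; simp
  set t := Tri.card with htdef
  have hTt : t ≤ n - 2 := by
    rw [htdef]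
    calc Tri.card ≤ Finset.univ.card := Finset.card_le_univ Tri
      _ = n - 2 := by simp
  -- choose star centers
  have hctr0 : ∀ i, ∃ a : Fin n, i ∉ Tri → ∀ v ∈ C i, a ∈ v.1 := by
    intro i
    by_cases hi : i ∈ Tri
    · exact ⟨⟨0, by omega⟩, fun h => absurd hi h⟩
    · rcases hst i with hS | hT
      · obtain ⟨a, ha⟩ := hS; exact ⟨a, fun _ => ha⟩
      · exact absurd ((hTriMem i).mpr hT) hi
  choose ctr hctr using hctr0
  set Centers : Finset (Fin n) := Triᶜ.image ctr with hCdef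
  set N : Finset (Fin n) := Centersᶜ with hNdef
  have hCenters : Centers.card ≤ (n - 2) - t := by
    rw [hCdef]
    calc (Triᶜ.image ctr).card ≤ Triᶜ.card := Finset.card_image_le
      _ = (n - 2) - t := by rw [Finset.card_compl]; simp [htdef]
  have hNcard : N.card = n - Centers.card := by
    rw [hNdef, Finset.card_compl]; simp
  have hNge : t + 2 ≤ N.card := by omega
  set E : Finset (KVert n) := Finset.univ.filter (fun v => v.1 ⊆ N) with hEdef
  have hEmem : ∀ v : KVert n, v ∈ E ↔ v.1 ⊆ N := by
    intro v; rw [hEdef]; simp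
  have hE : E.card = N.card.choose 2 := by
    rw [← Finset.card_powersetCard]
    apply Finset.card_bij (fun (v : KVert n) _ => v.1)
    · intro v hv
      rw [Finset.mem_powersetCard]
      exact ⟨(hEmem v).mp hv, v.2⟩
    · intro u hu v hv h
      exact Subtype.ext h
    · intro s hs
      rw [Finset.mem_powersetCard] at hs
      exact ⟨⟨s, hs.2⟩, (hEmem _).mpr hs.1, rfl⟩
  have hEcls : ∀ v ∈ E, ∃ i ∈ Tri, v ∈ C i := by
    intro v hv
    obtain ⟨i, hi, -⟩ := huniq v
    refine ⟨i, ?_, hi⟩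
    by_contra hiT
    have h1 : ctr i ∈ v.1 := hctr i hiT v hi
    have hmem : ctr i ∈ Centers := by
      rw [hCdef]
      exact Finset.mem_image.mpr ⟨i, Finset.mem_compl.mpr hiT, rfl⟩
    have hvN : v.1 ⊆ N := (hEmem v).mp hv
    have := hvN h1
    rw [hNdef] at this
    exact Finset.mem_compl.mp this hmem
  have hEunion : E = Tri.biUnion (fun i => E.filter (fun v => v ∈ C i)) := by
    apply Finset.Subset.antisymm
    · intro v hv
      obtain ⟨i, hiT, hvi⟩ := hEcls v hv
      exact Finset.mem_biUnion.mpr ⟨i, hiT, Finset.mem_filter.mpr ⟨hv, hvi⟩⟩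
    · intro v hv
      obtain ⟨i, _, hvi⟩ := Finset.mem_biUnion.mp hv
      exact (Finset.mem_filter.mp hvi).1
  have hdisj : ∀ i ∈ Tri, ∀ j ∈ Tri, i ≠ j →
      Disjoint (E.filter (fun v => v ∈ C i)) (E.filter (fun v => v ∈ C j)) := by
    intro i _ j _ hij
    rw [Finset.disjoint_left]
    intro v hvi hvj
    obtain ⟨k, hk, hu⟩ := huniq v
    exact hij ((hu i (Finset.mem_filter.mp hvi).2).trans (hu j (Finset.mem_filter.mp hvj).2).symm)
  have hcard_sum : E.card = ∑ i ∈ Tri, (E.filter (fun v => v ∈ C i)).card := by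
    conv_lhs => rw [hEunion]
    exact Finset.card_biUnion hdisj
  have hbound : ∀ i ∈ Tri, (E.filter (fun v => v ∈ C i)).card ≤ 3 := by
    intro i hiT
    obtain ⟨a, b, c, hab, hac, hbc, hCi⟩ := (hTriMem i).mp hiT
    have hsub : E.filter (fun v => v ∈ C i) ⊆
        {⟨{a,b}, Finset.card_pair hab⟩, ⟨{a,c}, Finset.card_pair hac⟩,
          ⟨{b,c}, Finset.card_pair hbc⟩} := by
      intro v hv
      have hvCi := (Finset.mem_filter.mp hv).2
      rw [hCi] at hvCi
      simp only [Set.mem_setOf_eq] at hvCi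
      simp only [Finset.mem_insert, Finset.mem_singleton]
      rcases hvCi with h|h|h
      · exact Or.inl (Subtype.ext h)
      · exact Or.inr (Or.inl (Subtype.ext h))
      · exact Or.inr (Or.inr (Subtype.ext h))
    have c0 := Finset.card_le_card hsub
    have c1 := Finset.card_insert_le (⟨{a,b}, Finset.card_pair hab⟩ : KVert n)
      {⟨{a,c}, Finset.card_pair hac⟩, ⟨{b,c}, Finset.card_pair hbc⟩}
    have c2 := Finset.card_insert_le (⟨{a,c}, Finset.card_pair hac⟩ : KVert n)
      {⟨{b,c}, Finset.card_pair hbc⟩}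
    have c3 : ({⟨{b,c}, Finset.card_pair hbc⟩} : Finset (KVert n)).card = 1 :=
      Finset.card_singleton _
    omega
  have hEle : E.card ≤ 3 * t := by
    rw [hcard_sum]
    calc ∑ i ∈ Tri, (E.filter (fun v => v ∈ C i)).card ≤ ∑ _i ∈ Tri, 3 :=
        Finset.sum_le_sum hbound
      _ = 3 * t := by rw [Finset.sum_const, smul_eq_mul, mul_comm, htdef]
  have hkey : (t+2).choose 2 ≤ 3 * t := by
    calc (t+2).choose 2 ≤ N.card.choose 2 := Nat.choose_le_choose 2 hNge
      _ = E.card := hE.symm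
      _ ≤ 3*t := hEle
  have ht12 : t = 1 ∨ t = 2 := by
    have h2 : (t + 2).choose 2 = (t*t + 3*t + 2)/2 := by
      rw [Nat.choose_two_right]
      have h21 : t + 2 - 1 = t + 1 := rfl
      rw [h21]
      congr 1
      ring
    have hcase : t < 3 ∨ 3*t ≤ t*t := by
      rcases lt_or_ge t 3 with h|h
      · exact Or.inl h
      · exact Or.inr (Nat.mul_le_mul_right t h)
    omega
  have ht1 : t = 1 := by
    rcases ht12 with h | h
    · exact h
    exfalso
    obtain ⟨i, j, hij, hTripair⟩ := Finset.card_eq_two.mp (htdef ▸ h)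
    have hiT : i ∈ Tri := by rw [hTripair]; simp
    have hjT : j ∈ Tri := by rw [hTripair]; simp
    -- E.card ≥ 6 and ≤ 6
    have hE6 : E.card = 6 := by
      have h6 : (6 : ℕ) = (4).choose 2 := by decide
      have hge : 6 ≤ E.card := by
        rw [hE, h6]
        exact Nat.choose_le_choose 2 (by omega)
      omega
    -- each triangular class contributes exactly 3
    have hsum2 : (E.filter (fun v => v ∈ C i)).card + (E.filter (fun v => v ∈ C j)).card = 6 := by
      have := hcard_sum
      rw [hTripair, Finset.sum_pair hij] at this
      omega
    have hfi : (E.filter (fun v => v ∈ C i)).card = 3 := by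
      have := hbound i hiT; have := hbound j hjT; omega
    have hfj : (E.filter (fun v => v ∈ C j)).card = 3 := by
      have := hbound i hiT; omega
    -- N has exactly 4 elements
    have hN4 : N.card = 4 := by
      by_contra hne4
      have h5 : 5 ≤ N.card := by omega
      have : (5).choose 2 ≤ N.card.choose 2 := Nat.choose_le_choose 2 h5
      rw [← hE] at this
      simp only [show (5).choose 2 = 10 from by decide] at this
      omega
    -- symbols of both triangles lie in N
    obtain ⟨a, b, c, hab, hac, hbc, hCi⟩ := (hTriMem i).mp hiT
    obtain ⟨d, e, f, hde, hdf, hef, hCj⟩ := (hTriMem j).mp hjT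
    have hsymbN : ∀ (x y z : Fin n) (hxy : x ≠ y) (hxz : x ≠ z) (hyz : y ≠ z)
        (k : Fin (n-2)) (hk : k ∈ Tri)
        (hCk : C k = {v : KVert n | v.1 = {x, y} ∨ v.1 = {x, z} ∨ v.1 = {y, z}})
        (hfk : (E.filter (fun v => v ∈ C k)).card = 3),
        ({x, y, z} : Finset (Fin n)) ⊆ N := by
      intro x y z hxy hxz hyz k hk hCk hfk
      have hsub : E.filter (fun v => v ∈ C k) ⊆
          {⟨{x,y}, Finset.card_pair hxy⟩, ⟨{x,z}, Finset.card_pair hxz⟩,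
            ⟨{y,z}, Finset.card_pair hyz⟩} := by
        intro v hv
        have hvCk := (Finset.mem_filter.mp hv).2
        rw [hCk] at hvCk
        simp only [Set.mem_setOf_eq] at hvCk
        simp only [Finset.mem_insert, Finset.mem_singleton]
        rcases hvCk with h|h|h
        · exact Or.inl (Subtype.ext h)
        · exact Or.inr (Or.inl (Subtype.ext h))
        · exact Or.inr (Or.inr (Subtype.ext h))
      have hcard3 : ({⟨{x,y}, Finset.card_pair hxy⟩, ⟨{x,z}, Finset.card_pair hxz⟩,
          ⟨{y,z}, Finset.card_pair hyz⟩} : Finset (KVert n)).card ≤ 3 := by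
        have c1 := Finset.card_insert_le (⟨{x,y}, Finset.card_pair hxy⟩ : KVert n)
          {⟨{x,z}, Finset.card_pair hxz⟩, ⟨{y,z}, Finset.card_pair hyz⟩}
        have c2 := Finset.card_insert_le (⟨{x,z}, Finset.card_pair hxz⟩ : KVert n)
          {⟨{y,z}, Finset.card_pair hyz⟩}
        have c3 : ({⟨{y,z}, Finset.card_pair hyz⟩} : Finset (KVert n)).card = 1 :=
          Finset.card_singleton _
        omega
      have heq := Finset.eq_of_subset_of_card_le hsub (by omega)
      have hmem1 : (⟨{x,y}, Finset.card_pair hxy⟩ : KVert n) ∈ E.filter (fun v => v ∈ C k) := by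
        rw [heq]; simp
      have hmem2 : (⟨{x,z}, Finset.card_pair hxz⟩ : KVert n) ∈ E.filter (fun v => v ∈ C k) := by
        rw [heq]; simp
      have hxyN : ({x,y} : Finset (Fin n)) ⊆ N :=
        (hEmem _).mp (Finset.mem_filter.mp hmem1).1
      have hxzN : ({x,z} : Finset (Fin n)) ⊆ N :=
        (hEmem _).mp (Finset.mem_filter.mp hmem2).1
      intro w hw
      rcases Finset.mem_insert.mp hw with rfl | hw
      · exact hxyN (Finset.mem_insert_self _ _)
      rcases Finset.mem_insert.mp hw with rfl | hw
      · exact hxyN (by simp)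
      rw [Finset.mem_singleton] at hw
      subst hw
      exact hxzN (by simp)
    have hAN : ({a, b, c} : Finset (Fin n)) ⊆ N := hsymbN a b c hab hac hbc i hiT hCi hfi
    have hBN : ({d, e, f} : Finset (Fin n)) ⊆ N := hsymbN d e f hde hdf hef j hjT hCj hfj
    -- |A ∩ B| ≥ 2
    have hcardA : ({a, b, c} : Finset (Fin n)).card = 3 := by
      rw [Finset.card_insert_of_notMem (by simp [hab, hac]),
        Finset.card_insert_of_notMem (by simp [hbc]), Finset.card_singleton]
    have hcardB : ({d, e, f} : Finset (Fin n)).card = 3 := by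
      rw [Finset.card_insert_of_notMem (by simp [hde, hdf]),
        Finset.card_insert_of_notMem (by simp [hef]), Finset.card_singleton]
    have hunion : (({a,b,c} : Finset (Fin n)) ∪ {d,e,f}).card ≤ 4 := by
      rw [← hN4]
      exact Finset.card_le_card (Finset.union_subset hAN hBN)
    have hiu := Finset.card_inter_add_card_union ({a,b,c} : Finset (Fin n)) {d,e,f}
    have hinter : 2 ≤ (({a,b,c} : Finset (Fin n)) ∩ {d,e,f}).card := by omega
    obtain ⟨x, hx, y, hy, hxy⟩ := Finset.one_lt_card.mp (by omega :
      1 < (({a,b,c} : Finset (Fin n)) ∩ {d,e,f}).card)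
    have hxA : x ∈ ({a,b,c} : Finset (Fin n)) := (Finset.mem_inter.mp hx).1
    have hxB : x ∈ ({d,e,f} : Finset (Fin n)) := (Finset.mem_inter.mp hx).2
    have hyA : y ∈ ({a,b,c} : Finset (Fin n)) := (Finset.mem_inter.mp hy).1
    have hyB : y ∈ ({d,e,f} : Finset (Fin n)) := (Finset.mem_inter.mp hy).2
    set v : KVert n := ⟨{x, y}, Finset.card_pair hxy⟩ with hvdef
    have hpairA : v.1 ⊆ ({a,b,c} : Finset (Fin n)) := by
      intro w hw
      rcases Finset.mem_insert.mp hw with rfl | hw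
      · exact hxA
      · rw [Finset.mem_singleton] at hw; subst hw; exact hyA
    have hpairB : v.1 ⊆ ({d,e,f} : Finset (Fin n)) := by
      intro w hw
      rcases Finset.mem_insert.mp hw with rfl | hw
      · exact hxB
      · rw [Finset.mem_singleton] at hw; subst hw; exact hyB
    have hvCi : v ∈ C i := by
      rw [hCi]
      exact pair_subset_triple hab v.2 hpairA
    have hvCj : v ∈ C j := by
      rw [hCj]
      exact pair_subset_triple hde v.2 hpairB
    obtain ⟨k, hk, hu⟩ := huniq v
    exact hij ((hu i hvCi).trans (hu j hvCj).symm)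
  obtain ⟨i0, hTri0⟩ := Finset.card_eq_one.mp (htdef ▸ ht1)
  refine ⟨i0, ?_, ?_⟩
  · have hi0 : i0 ∈ Tri := hTri0 ▸ Finset.mem_singleton_self i0
    exact (hTriMem i0).mp hi0
  · intro j hj
    have hjT : j ∈ Tri := (hTriMem j).mpr hj
    rw [hTri0] at hjT
    exact Finset.mem_singleton.mp hjT
end

section
/- For every integer n ≥ 5, n − 1 ≤ χ_td(KG(n,2)). -/
open Finset

lemma pair_mem {n : ℕ} {s : Finset (Fin n)} (h2 : s.card = 2) {a : Fin n} (ha : a ∈ s) :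
    ∃ b, b ≠ a ∧ s = {a, b} := by
  obtain ⟨x, y, hxy, rfl⟩ := Finset.card_eq_two.mp h2
  simp only [Finset.mem_insert, Finset.mem_singleton] at ha
  rcases ha with rfl | rfl
  · exact ⟨y, hxy.symm, rfl⟩
  · exact ⟨x, hxy, Finset.pair_comm x a⟩

/-- Structure of intersecting families of 2-sets: star or triangle. -/
lemma struct {n : ℕ} (A : Set (KVert n)) (hA : A.Nonempty)
    (hind : ∀ u ∈ A, ∀ w ∈ A, ¬ Disjoint u.1 w.1) :
    (∃ a : Fin n, ∀ v ∈ A, a ∈ v.1) ∨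
    (∃ T : Finset (Fin n), T.card = 3 ∧ ∀ v : KVert n, v ∈ A ↔ v.1 ⊆ T) := by
  by_cases hs : ∃ a : Fin n, ∀ v ∈ A, a ∈ v.1
  · exact Or.inl hs
  right
  push_neg at hs
  obtain ⟨u, hu⟩ := hA
  obtain ⟨x, y, hxy, huxy⟩ := Finset.card_eq_two.mp u.2
  obtain ⟨v, hv, hxv⟩ := hs x
  obtain ⟨w, hw, hyw⟩ := hs y
  -- y ∈ v.1
  have hyv : y ∈ v.1 := by
    obtain ⟨z, hz1, hz2⟩ := Finset.not_disjoint_iff.mp (hind u hu v hv)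
    rw [huxy] at hz1
    rcases Finset.mem_insert.mp hz1 with rfl | hz
    · exact absurd hz2 hxv
    · rw [Finset.mem_singleton.mp hz] at hz2; exact hz2
  obtain ⟨q, hqy, hvyq⟩ := pair_mem v.2 hyv
  -- x ∈ w.1
  have hxw : x ∈ w.1 := by
    obtain ⟨z, hz1, hz2⟩ := Finset.not_disjoint_iff.mp (hind u hu w hw)
    rw [huxy] at hz1
    rcases Finset.mem_insert.mp hz1 with rfl | hz
    · exact hz2
    · rw [Finset.mem_singleton.mp hz] at hz2; exact absurd hz2 hyw
  obtain ⟨r, hrx, hwxr⟩ := pair_mem w.2 hxw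
  -- r = q
  have hrq : r = q := by
    obtain ⟨z, hz1, hz2⟩ := Finset.not_disjoint_iff.mp (hind w hw v hv)
    rw [hwxr] at hz1
    rcases Finset.mem_insert.mp hz1 with rfl | hz
    · exact absurd hz2 hxv
    · rw [Finset.mem_singleton.mp hz] at hz2
      rw [hvyq] at hz2
      rcases Finset.mem_insert.mp hz2 with h | h
      · exfalso; apply hyw; rw [hwxr, h]; exact Finset.mem_insert_of_mem (Finset.mem_singleton_self _)
      · exact Finset.mem_singleton.mp h
  rw [hrq] at hwxr
  have hxq : x ≠ q := fun h => hxv (by rw [hvyq, h]; exact Finset.mem_insert_of_mem (Finset.mem_singleton_self _))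
  have hyq : y ≠ q := fun h => hqy h.symm
  refine ⟨{x, y, q}, ?_, ?_⟩
  · rw [Finset.card_insert_of_notMem (by simp [hxy, hxq]),
      Finset.card_insert_of_notMem (by simp [hyq]), Finset.card_singleton]
  intro z
  constructor
  · intro hz
    by_cases hxz : x ∈ z.1
    · obtain ⟨e, hex, hze⟩ := pair_mem z.2 hxz
      have hev : e ∈ v.1 := by
        obtain ⟨m, hm1, hm2⟩ := Finset.not_disjoint_iff.mp (hind z hz v hv)
        rw [hze] at hm1
        rcases Finset.mem_insert.mp hm1 with rfl | hm
        · exact absurd hm2 hxv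
        · rw [Finset.mem_singleton.mp hm] at hm2; exact hm2
      rw [hze]
      rw [hvyq] at hev
      intro a ha
      rcases Finset.mem_insert.mp ha with rfl | ha
      · exact Finset.mem_insert_self _ _
      · rw [Finset.mem_singleton.mp ha]
        rcases Finset.mem_insert.mp hev with rfl | he
        · exact Finset.mem_insert_of_mem (Finset.mem_insert_self _ _)
        · rw [Finset.mem_singleton.mp he]
          exact Finset.mem_insert_of_mem (Finset.mem_insert_of_mem (Finset.mem_singleton_self _))
    · have hyz : y ∈ z.1 := by
        obtain ⟨m, hm1, hm2⟩ := Finset.not_disjoint_iff.mp (hind z hz u hu)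
        rw [huxy] at hm2
        rcases Finset.mem_insert.mp hm2 with rfl | hm
        · exact absurd hm1 hxz
        · rw [← Finset.mem_singleton.mp hm]; exact hm1
      have hqz : q ∈ z.1 := by
        obtain ⟨m, hm1, hm2⟩ := Finset.not_disjoint_iff.mp (hind z hz w hw)
        rw [hwxr] at hm2
        rcases Finset.mem_insert.mp hm2 with rfl | hm
        · exact absurd hm1 hxz
        · rw [← Finset.mem_singleton.mp hm]; exact hm1
      obtain ⟨e, hey, hze⟩ := pair_mem z.2 hyz
      have : q = e := by
        rw [hze] at hqz
        rcases Finset.mem_insert.mp hqz with h | h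
        · exact absurd h.symm hyq
        · exact Finset.mem_singleton.mp h
      subst this
      rw [hze]
      intro a ha
      rcases Finset.mem_insert.mp ha with rfl | ha
      · exact Finset.mem_insert_of_mem (Finset.mem_insert_self _ _)
      · rw [Finset.mem_singleton.mp ha]
        exact Finset.mem_insert_of_mem (Finset.mem_insert_of_mem (Finset.mem_singleton_self _))
  · intro hzT
    obtain ⟨α, β, hab, hz⟩ := Finset.card_eq_two.mp z.2
    have hα : α ∈ ({x, y, q} : Finset (Fin n)) := hzT (by rw [hz]; exact Finset.mem_insert_self _ _)
    have hβ : β ∈ ({x, y, q} : Finset (Fin n)) := hzT (by rw [hz]; exact Finset.mem_insert_of_mem (Finset.mem_singleton_self _))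
    have hmem : ∀ z' : KVert n, z'.1 = {x, y} ∨ z'.1 = {y, q} ∨ z'.1 = {x, q} → z' ∈ A := by
      rintro z' (h | h | h)
      · have : z' = u := Subtype.ext (by rw [h, huxy])
        rwa [this]
      · have : z' = v := Subtype.ext (by rw [h, hvyq])
        rwa [this]
      · have : z' = w := Subtype.ext (by rw [h, hwxr])
        rwa [this]
    simp only [Finset.mem_insert, Finset.mem_singleton] at hα hβ
    rcases hα with rfl | rfl | rfl <;> rcases hβ with rfl | rfl | rfl
    · exact absurd rfl hab
    · exact hmem z (Or.inl hz)
    · exact hmem z (Or.inr (Or.inr hz))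
    · exact hmem z (Or.inl (hz.trans (Finset.pair_comm _ _)))
    · exact absurd rfl hab
    · exact hmem z (Or.inr (Or.inl hz))
    · exact hmem z (Or.inr (Or.inr (hz.trans (Finset.pair_comm _ _))))
    · exact hmem z (Or.inr (Or.inl (hz.trans (Finset.pair_comm _ _))))
    · exact absurd rfl hab


/-- Extraction: if all 2-subsets of A are 2-subsets of B and A has ≥ 2 elements, A ⊆ B. -/
lemma ext_pc {n : ℕ} {A B : Finset (Fin n)} (hA : 2 ≤ A.card)
    (h : A.powersetCard 2 ⊆ B.powersetCard 2) : A ⊆ B := by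
  intro x hx
  obtain ⟨y, hy, hyx⟩ := Finset.exists_mem_ne (s := A) (by omega) x
  have hp : ({x, y} : Finset (Fin n)) ∈ A.powersetCard 2 := by
    rw [Finset.mem_powersetCard]
    exact ⟨Finset.insert_subset hx (Finset.singleton_subset_iff.mpr hy),
      Finset.card_pair (Ne.symm hyx)⟩
  have := Finset.mem_powersetCard.mp (h hp)
  exact this.1 (Finset.mem_insert_self _ _)

lemma main_bound {n k : ℕ} (hn : 5 ≤ n) (hk : k ≤ n - 2)
    (C : Fin k → Set (KVert n)) (hC : IsTDColoring (KG2 n) C) : False := by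
  classical
  obtain ⟨⟨huniq, hne, hind⟩, htd⟩ := hC
  have hind' : ∀ i, ∀ u ∈ C i, ∀ w ∈ C i, ¬ Disjoint u.1 w.1 :=
    fun i u hu w hw => hind i u hu w hw
  have hn0 : 0 < n := by omega
  have hstruct : ∀ i : Fin k, (∃ a, ∀ v ∈ C i, a ∈ v.1) ∨
      (∃ T : Finset (Fin n), T.card = 3 ∧ ∀ v, v ∈ C i ↔ v.1 ⊆ T) :=
    fun i => struct (C i) (hne i) (hind' i)
  set St : Finset (Fin k) := Finset.univ.filter (fun i => ∃ a, ∀ v ∈ C i, a ∈ v.1) with hSt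
  set ctr : Fin k → Fin n := fun i =>
    if h : ∃ a, ∀ v ∈ C i, a ∈ v.1 then h.choose else ⟨0, hn0⟩ with hctrdef
  set tri : Fin k → Finset (Fin n) := fun i =>
    if h : ∃ T : Finset (Fin n), T.card = 3 ∧ ∀ v, v ∈ C i ↔ v.1 ⊆ T then h.choose else ∅
    with htridef
  have hctr : ∀ i ∈ St, ∀ v ∈ C i, ctr i ∈ v.1 := by
    intro i hi v hv
    have h := (Finset.mem_filter.mp hi).2
    rw [hctrdef]; simp only [dif_pos h]
    exact h.choose_spec v hv
  have htri : ∀ i ∉ St, (tri i).card = 3 ∧ ∀ v, v ∈ C i ↔ v.1 ⊆ tri i := by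
    intro i hi
    have hns : ¬ ∃ a, ∀ v ∈ C i, a ∈ v.1 := by
      intro h; exact hi (Finset.mem_filter.mpr ⟨Finset.mem_univ _, h⟩)
    have h := (hstruct i).resolve_left hns
    rw [htridef]; simp only [dif_pos h]
    exact h.choose_spec
  set Z : Finset (Fin n) := St.image ctr with hZdef
  set W : Finset (Fin n) := Zᶜ with hWdef
  -- every 2-subset of W lies in a triangle class
  have hcov : ∀ e ∈ W.powersetCard 2, ∃ i ∉ St, e ⊆ tri i := by
    intro e he
    obtain ⟨heW, he2⟩ := Finset.mem_powersetCard.mp he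
    obtain ⟨i, hi, -⟩ := huniq (⟨e, he2⟩ : KVert n)
    by_cases hiS : i ∈ St
    · exfalso
      have h1 : ctr i ∈ e := hctr i hiS _ hi
      have h2 : ctr i ∈ Z := Finset.mem_image_of_mem ctr hiS
      exact (Finset.mem_compl.mp (heW h1)) h2
    · exact ⟨i, hiS, ((htri i hiS).2 _).mp hi⟩
  have hsub : W.powersetCard 2 ⊆ Stᶜ.biUnion (fun i => (tri i).powersetCard 2) := by
    intro e he
    obtain ⟨i, hiS, hei⟩ := hcov e he
    exact Finset.mem_biUnion.mpr ⟨i, Finset.mem_compl.mpr hiS,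
      Finset.mem_powersetCard.mpr ⟨hei, (Finset.mem_powersetCard.mp he).2⟩⟩
  set t := Stᶜ.card with htdef
  set s := St.card with hsdef
  set w := W.card with hwdef
  have hcount : w.choose 2 ≤ 3 * t := by
    have h1 : (W.powersetCard 2).card ≤ ∑ i ∈ Stᶜ, ((tri i).powersetCard 2).card :=
      le_trans (Finset.card_le_card hsub) (Finset.card_biUnion_le)
    have h2 : ∀ i ∈ Stᶜ, ((tri i).powersetCard 2).card = 3 := by
      intro i hi
      rw [Finset.card_powersetCard, (htri i (Finset.mem_compl.mp hi)).1]
      rfl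
    rw [Finset.card_powersetCard] at h1
    rw [Finset.sum_congr rfl h2, Finset.sum_const, smul_eq_mul, mul_comm] at h1
    exact h1
  have hsum : s + t = k := by
    rw [hsdef, htdef]; simpa using Finset.card_add_card_compl St
  have hWc : w = n - Z.card := by
    rw [hwdef, hWdef, Finset.card_compl, Fintype.card_fin]
  have hZs : Z.card ≤ s := Finset.card_image_le
  have hZn : Z.card ≤ n := le_trans (Finset.card_le_univ Z) (by simp)
  have hw2 : t + 2 ≤ w := by omega
  -- t = 1 or t = 2
  have ht12 : t = 1 ∨ t = 2 := by
    have h1 : (t + 2).choose 2 ≤ 3 * t :=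
      le_trans (Nat.choose_le_choose 2 hw2) hcount
    rcases Nat.lt_or_ge t 3 with h | h
    · interval_cases t
      · norm_num at h1
      · exact Or.inl rfl
      · exact Or.inr rfl
    · exfalso
      have h3 : 6 * t + 2 ≤ (t + 2) * (t + 1) := by nlinarith
      have h4 : 3 * t + 1 ≤ (t + 2) * (t + 1) / 2 := by omega
      rw [Nat.choose_two_right] at h1
      have : t + 2 - 1 = t + 1 := by omega
      rw [this] at h1
      omega
  have hWpc : (W.powersetCard 2).card = w.choose 2 := by
    rw [Finset.card_powersetCard, hwdef]
  rcases ht12 with ht | ht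
  · -- Case t = 1 : one triangle class, n-3 star classes
    have hw3 : w = 3 := by
      have hle : w ≤ 3 := by
        by_contra h
        push_neg at h
        have h4 := Nat.choose_le_choose 2 (show 4 ≤ w by omega)
        have h6 : Nat.choose 4 2 = 6 := by decide
        omega
      omega
    have hZc : Z.card = s := by omega
    have hinj : Set.InjOn ctr ↑St := Finset.card_image_iff.mp (by rw [← hZdef, hZc, hsdef])
    obtain ⟨i₀, hTr⟩ := Finset.card_eq_one.mp ht
    have hi₀ : i₀ ∉ St := by
      have h : i₀ ∈ Stᶜ := by rw [hTr]; exact Finset.mem_singleton_self _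
      exact Finset.mem_compl.mp h
    obtain ⟨hT3, hTiff⟩ := htri i₀ hi₀
    have hpc : W.powersetCard 2 ⊆ (tri i₀).powersetCard 2 := by
      intro e he
      obtain ⟨i, hiS, hei⟩ := hcov e he
      have hii : i = i₀ := by
        have h : i ∈ Stᶜ := Finset.mem_compl.mpr hiS
        rw [hTr] at h; exact Finset.mem_singleton.mp h
      subst hii
      exact Finset.mem_powersetCard.mpr ⟨hei, (Finset.mem_powersetCard.mp he).2⟩
    have hpceq : W.powersetCard 2 = (tri i₀).powersetCard 2 := by
      apply Finset.eq_of_subset_of_card_le hpc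
      rw [Finset.card_powersetCard, hT3, hWpc, hw3]
    have hTW : tri i₀ ⊆ W := by
      refine ext_pc (by omega) ?_
      rw [← hpceq]
    obtain ⟨e₀, he₀T, he₀2⟩ := Finset.exists_subset_card_eq (show 2 ≤ (tri i₀).card by omega)
    obtain ⟨j, hjne, hjadj⟩ := htd (⟨e₀, he₀2⟩ : KVert n)
    by_cases hjS : j ∈ St
    · obtain ⟨a, hae⟩ := Finset.card_pos.mp (show 0 < e₀.card by omega)
      have haT : a ∈ tri i₀ := he₀T hae
      have haW : a ∈ W := hTW haT
      have haZ : a ∉ Z := Finset.mem_compl.mp haW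
      have hzZ : ctr j ∈ Z := Finset.mem_image_of_mem ctr hjS
      have hza : ctr j ≠ a := fun h => haZ (h ▸ hzZ)
      have hp2 : ({ctr j, a} : Finset (Fin n)).card = 2 := Finset.card_pair hza
      obtain ⟨l, hl, -⟩ := huniq (⟨{ctr j, a}, hp2⟩ : KVert n)
      by_cases hlS : l ∈ St
      · have hcl : ctr l ∈ ({ctr j, a} : Finset (Fin n)) := hctr l hlS _ hl
        rcases Finset.mem_insert.mp hcl with h | h
        · have hlj : l = j := hinj hlS hjS h
          subst hlj
          have hadj : Disjoint e₀ ({ctr l, a} : Finset (Fin n)) := hjadj _ hl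
          exact (Finset.disjoint_left.mp hadj hae)
            (Finset.mem_insert_of_mem (Finset.mem_singleton_self _))
        · rw [Finset.mem_singleton] at h
          exact haZ (h ▸ Finset.mem_image_of_mem ctr hlS)
      · have hli : l = i₀ := by
          have h : l ∈ Stᶜ := Finset.mem_compl.mpr hlS
          rw [hTr] at h; exact Finset.mem_singleton.mp h
        subst hli
        have hsubT : ({ctr j, a} : Finset (Fin n)) ⊆ tri l := (hTiff _).mp hl
        have hzW : ctr j ∈ W := hTW (hsubT (Finset.mem_insert_self _ _))
        exact (Finset.mem_compl.mp hzW) hzZ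
    · have hji : j = i₀ := by
        have h : j ∈ Stᶜ := Finset.mem_compl.mpr hjS
        rw [hTr] at h; exact Finset.mem_singleton.mp h
      subst hji
      have hv₀C : (⟨e₀, he₀2⟩ : KVert n) ∈ C j := (hTiff _).mpr he₀T
      have hdisj : Disjoint e₀ e₀ := hjadj _ hv₀C
      rw [disjoint_self] at hdisj
      rw [hdisj] at he₀2
      simp at he₀2
  · -- Case t = 2 : two triangle classes
    obtain ⟨i, j, hij, hTr⟩ := Finset.card_eq_two.mp ht
    have hiS : i ∉ St := Finset.mem_compl.mp (by rw [hTr]; exact Finset.mem_insert_self _ _)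
    have hjS : j ∉ St := Finset.mem_compl.mp
      (by rw [hTr]; exact Finset.mem_insert_of_mem (Finset.mem_singleton_self _))
    have hw4 : w = 4 := by
      have hle : w ≤ 4 := by
        by_contra h
        push_neg at h
        have h5 := Nat.choose_le_choose 2 (show 5 ≤ w by omega)
        have h6 : Nat.choose 5 2 = 10 := by decide
        omega
      omega
    have hsubU : W.powersetCard 2 ⊆ (tri i).powersetCard 2 ∪ (tri j).powersetCard 2 := by
      intro e he
      obtain ⟨l, hlS, hel⟩ := hcov e he
      have h : l ∈ Stᶜ := Finset.mem_compl.mpr hlS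
      rw [hTr] at h
      rcases Finset.mem_insert.mp h with rfl | h
      · exact Finset.mem_union_left _
          (Finset.mem_powersetCard.mpr ⟨hel, (Finset.mem_powersetCard.mp he).2⟩)
      · rw [Finset.mem_singleton] at h; subst h
        exact Finset.mem_union_right _
          (Finset.mem_powersetCard.mpr ⟨hel, (Finset.mem_powersetCard.mp he).2⟩)
    have heq : W.powersetCard 2 = (tri i).powersetCard 2 ∪ (tri j).powersetCard 2 := by
      apply Finset.eq_of_subset_of_card_le hsubU
      refine le_trans (Finset.card_union_le _ _) ?_
      rw [Finset.card_powersetCard, Finset.card_powersetCard, (htri i hiS).1, (htri j hjS).1,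
        hWpc, hw4]
      decide
    have hti : tri i ⊆ W := by
      refine ext_pc (by rw [(htri i hiS).1]; norm_num) ?_
      rw [heq]; exact Finset.subset_union_left
    have htj : tri j ⊆ W := by
      refine ext_pc (by rw [(htri j hjS).1]; norm_num) ?_
      rw [heq]; exact Finset.subset_union_right
    have huc : (tri i ∪ tri j).card ≤ 4 := by
      have h : tri i ∪ tri j ⊆ W := Finset.union_subset hti htj
      have h2 := Finset.card_le_card h
      omega
    have hic : 2 ≤ (tri i ∩ tri j).card := by
      have h := Finset.card_union_add_card_inter (tri i) (tri j)
      rw [(htri i hiS).1, (htri j hjS).1] at h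
      omega
    obtain ⟨e, heT, he2⟩ := Finset.exists_subset_card_eq hic
    have hei : (⟨e, he2⟩ : KVert n) ∈ C i :=
      ((htri i hiS).2 _).mpr (heT.trans Finset.inter_subset_left)
    have hej : (⟨e, he2⟩ : KVert n) ∈ C j :=
      ((htri j hjS).2 _).mpr (heT.trans Finset.inter_subset_right)
    obtain ⟨l, -, hluniq⟩ := huniq (⟨e, he2⟩ : KVert n)
    exact hij ((hluniq i hei).trans (hluniq j hej).symm)


lemma exists_tdc_s6 (n : ℕ) (hn : 5 ≤ n) :
    ∃ C : Fin (Fintype.card (KVert n)) → Set (KVert n), IsTDColoring (KG2 n) C := by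
  classical
  let e := (Fintype.equivFin (KVert n)).symm
  refine ⟨fun i => {e i}, ⟨?_, fun i => ⟨e i, rfl⟩, ?_⟩, ?_⟩
  · intro v
    refine ⟨e.symm v, by simp, fun i hi => ?_⟩
    have : v = e i := hi
    rw [this, Equiv.symm_apply_apply]
  · intro i u hu w hw
    have hu' : u = e i := hu
    have hw' : w = e i := hw
    rw [hu', hw']
    exact (KG2 n).loopless.irrefl _
  · intro v
    have hc : 2 ≤ (v.1ᶜ : Finset (Fin n)).card := by
      have h := Finset.card_compl (v.1 : Finset (Fin n))
      rw [v.2, Fintype.card_fin] at h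
      omega
    obtain ⟨f, hf, hf2⟩ := Finset.exists_subset_card_eq hc
    refine ⟨e.symm ⟨f, hf2⟩, ⟨e (e.symm ⟨f, hf2⟩), rfl⟩, ?_⟩
    intro u hu
    have hu' : u = e (e.symm ⟨f, hf2⟩) := hu
    rw [hu', Equiv.apply_symm_apply]
    show Disjoint v.1 f
    rw [Finset.disjoint_left]
    intro a ha haf
    exact (Finset.mem_compl.mp (hf haf)) ha


/-- For every `n ≥ 5`, `n - 1 ≤ χ_td(KG(n,2))`. -/
theorem stmt6 (n : ℕ) (hn : 5 ≤ n) :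
    n - 1 ≤ tdChromNum (KG2 n) := by
  refine le_csInf ⟨_, exists_tdc_s6 n hn⟩ ?_
  rintro m ⟨C, hC⟩
  by_contra h
  push_neg at h
  exact main_bound hn (by omega) C hC
end

section
/- Let n ≥ 5 and let f be a proper coloring of the Kneser graph KG(n,2) with exactly n − 1 nonempty color classes such that every color class is starlike (all vertices in the class share a common symbol). Then f is not a total dominator coloring. -/
/-- Build a vertex of `KG(n,2)` from two distinct symbols. -/
def mk2 {n : ℕ} (y z : Fin n) (h : y ≠ z) : KVert n :=
  ⟨{y, z}, by rw [Finset.card_insert_of_notMem (by simp [h]), Finset.card_singleton]⟩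

/-- Let `n ≥ 5` and let `C` be a proper coloring of `KG(n,2)` with
exactly `n - 1` nonempty color classes, all of which are starlike. Then `C` is not a
total dominator coloring. -/
theorem stmt7 (n : ℕ) (hn : 5 ≤ n)
    (C : Fin (n - 1) → Set (KVert n)) (hC : IsProperColoring (KG2 n) C)
    (hstar : ∀ i, Starlike (C i)) :
    ¬ IsTDColoring (KG2 n) C := by
  intro hTDC
  obtain ⟨⟨hexu, hne, hind⟩, hdom⟩ := hTDC
  choose a ha using hstar
  -- injectivity of the centers
  have hinj : Function.Injective a := by
    by_contra hninj
    rw [Function.not_injective_iff] at hninj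
    obtain ⟨i, j, hij, hne'⟩ := hninj
    have hsub : Finset.univ.image a ⊆ (Finset.univ.erase j).image a := by
      intro x hx
      rw [Finset.mem_image] at hx ⊢
      obtain ⟨i', _, rfl⟩ := hx
      by_cases h : i' = j
      · exact ⟨i, Finset.mem_erase.mpr ⟨hne', Finset.mem_univ i⟩, by rw [h] at *; exact hij⟩
      · exact ⟨i', Finset.mem_erase.mpr ⟨h, Finset.mem_univ i'⟩, rfl⟩
    have hcard : (Finset.univ.image a).card ≤ n - 2 := by
      calc (Finset.univ.image a).card ≤ ((Finset.univ.erase j).image a).card :=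
            Finset.card_le_card hsub
        _ ≤ (Finset.univ.erase j).card := Finset.card_image_le
        _ = (n - 1) - 1 := by rw [Finset.card_erase_of_mem (Finset.mem_univ j)]; simp
        _ ≤ n - 2 := by omega
    have hcompl : 1 < (Finset.univ.image a)ᶜ.card := by
      rw [Finset.card_compl]
      simp only [Fintype.card_fin]
      omega
    obtain ⟨y, hy, z, hz, hyz⟩ := Finset.one_lt_card.mp hcompl
    rw [Finset.mem_compl] at hy hz
    obtain ⟨k, hk, _⟩ := hexu (mk2 y z hyz)
    have hak := ha k _ hk
    simp only [mk2, Finset.mem_insert, Finset.mem_singleton] at hak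
    rcases hak with h | h
    · exact hy (Finset.mem_image.mpr ⟨k, Finset.mem_univ k, h⟩)
    · exact hz (Finset.mem_image.mpr ⟨k, Finset.mem_univ k, h⟩)
  -- a symbol z not in the range of a
  have : ∃ z : Fin n, ∀ i, a i ≠ z := by
    by_contra h
    push_neg at h
    have hsurj : Function.Surjective a := fun z => h z
    have := Fintype.card_le_of_surjective a hsurj
    simp only [Fintype.card_fin] at this
    omega
  obtain ⟨z, hz⟩ := this
  -- pick x ≠ z
  have : ∃ x : Fin n, x ≠ z := by
    have : Nontrivial (Fin n) := Fin.nontrivial_iff_two_le.mpr (by omega)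
    exact exists_ne z
  obtain ⟨x, hxz⟩ := this
  -- totally dominating class for v = {z, x}
  set v : KVert n := mk2 z x hxz.symm with hv
  obtain ⟨j, hjne, hj⟩ := hdom v
  obtain ⟨w, hw⟩ := hjne
  have haw : a j ∈ w.1 := ha j w hw
  have hadj : Disjoint v.1 w.1 := hj w hw
  have hzv : z ∈ v.1 := by simp [hv, mk2]
  have hyz2 : a j ≠ z := by
    intro h
    exact (Finset.disjoint_left.mp hadj hzv) (h ▸ haw)
  -- the vertex u = {z, a j} lies in class j
  set u : KVert n := mk2 z (a j) hyz2.symm with hu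
  obtain ⟨k, hk, _⟩ := hexu u
  have hak : a k ∈ u.1 := ha k u hk
  simp only [hu, mk2, Finset.mem_insert, Finset.mem_singleton] at hak
  have hkj : k = j := by
    rcases hak with h | h
    · exact absurd h (hz k)
    · exact hinj h
  subst hkj
  have := hj u hk
  have hdisj : Disjoint v.1 u.1 := this
  have hzu : z ∈ u.1 := by simp [hu, mk2]
  exact Finset.disjoint_left.mp hdisj hzv hzu
end

section
/- For every integer n ≥ 6, the total dominator chromatic number of the Kneser graph KG(n,2) equals n. -/
namespace Stmt12

open Finset

variable {n : ℕ}

lemma adj_iff {u w : KVert n} : (KG2 n).Adj u w ↔ Disjoint u.1 w.1 := Iff.rfl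

/-- the underlying pair of naturals -/
def vals (v : KVert n) : Finset ℕ := v.1.image Fin.val

lemma vals_card (v : KVert n) : (vals v).card = 2 := by
  rw [vals, Finset.card_image_of_injective _ Fin.val_injective, v.2]

lemma vals_nonempty (v : KVert n) : (vals v).Nonempty := by
  rw [← Finset.card_pos, vals_card]; omega

lemma mem_vals {v : KVert n} {a : ℕ} : a ∈ vals v ↔ ∃ x ∈ v.1, (x : ℕ) = a := by
  simp [vals]

lemma vals_lt {v : KVert n} {a : ℕ} (h : a ∈ vals v) : a < n := by
  rw [mem_vals] at h
  obtain ⟨x, _, rfl⟩ := h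
  exact x.2

lemma disjoint_vals {u w : KVert n} :
    Disjoint (vals u) (vals w) ↔ Disjoint u.1 w.1 := by
  constructor
  · intro h
    rw [Finset.disjoint_left] at h ⊢
    intro a ha hw
    exact h (mem_vals.mpr ⟨a, ha, rfl⟩) (mem_vals.mpr ⟨a, hw, rfl⟩)
  · intro h
    rw [Finset.disjoint_left] at h ⊢
    intro a ha hw
    rw [mem_vals] at ha hw
    obtain ⟨x, hx, rfl⟩ := ha
    obtain ⟨y, hy, hyx⟩ := hw
    have : y = x := Fin.ext hyx
    exact h hx (this ▸ hy)

/-- build a vertex from two distinct naturals -/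
def mkv (a b : ℕ) (ha : a < n) (hb : b < n) (hab : a ≠ b) : KVert n :=
  ⟨{⟨a, ha⟩, ⟨b, hb⟩}, by
    rw [Finset.card_pair]
    simp [Fin.ext_iff]; omega⟩

lemma vals_mkv (a b : ℕ) (ha : a < n) (hb : b < n) (hab : a ≠ b) :
    vals (mkv a b ha hb hab) = {a, b} := by
  simp [vals, mkv]

/-- The coloring function: class index of a vertex. -/
def coln (n : ℕ) (v : KVert n) : ℕ :=
  if 0 ∈ vals v then (if n - 1 ∈ vals v then 1 else 0)
  else if n - 1 ∈ vals v then 5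
  else if (vals v).sup id ≤ 3 then 2
  else if (vals v).sup id = 4 then (if 3 ∈ vals v then 4 else 3)
  else (vals v).sup id + 1

lemma sup_mem_vals (v : KVert n) : (vals v).sup id ∈ vals v := by
  obtain ⟨i, hi, hsup⟩ := Finset.exists_mem_eq_sup (vals v) (vals_nonempty v) id
  rw [hsup]; exact hi

lemma coln_lt (hn : 6 ≤ n) (v : KVert n) : coln n v < n := by
  have hm := sup_mem_vals v
  have h7 := vals_lt hm
  unfold coln
  split_ifs <;> try omega
  have hne : (vals v).sup id ≠ n - 1 := by
    intro hh; rw [hh] at hm; simp_all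
  omega

-- branch characterizations
lemma coln_eq_zero {v : KVert n} (h : coln n v = 0) : 0 ∈ vals v := by
  unfold coln at h
  split_ifs at h <;> first | assumption | omega

lemma coln_eq_one (hn : 6 ≤ n) {v : KVert n} (h : coln n v = 1) : vals v = {0, n - 1} := by
  have hn1 : (0:ℕ) ∈ vals v ∧ n - 1 ∈ vals v := by
    unfold coln at h
    split_ifs at h <;> first | exact ⟨by assumption, by assumption⟩ | omega
  have hne : (0:ℕ) ≠ n - 1 := by omega
  refine (Finset.eq_of_subset_of_card_le ?_ ?_).symm
  · intro a ha
    simp only [Finset.mem_insert, Finset.mem_singleton] at ha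
    rcases ha with rfl | rfl
    · exact hn1.1
    · exact hn1.2
  · rw [vals_card, Finset.card_pair hne]

lemma coln_eq_two {v : KVert n} (h : coln n v = 2) : vals v ⊆ {1, 2, 3} := by
  have hc : 0 ∉ vals v ∧ (vals v).sup id ≤ 3 := by
    unfold coln at h
    split_ifs at h <;> first | exact ⟨by assumption, by assumption⟩ | omega
  intro a ha
  have h1 : a ≤ (vals v).sup id := Finset.le_sup (f := id) ha
  have h2 : a ≠ 0 := fun h0 => hc.1 (h0 ▸ ha)
  simp only [Finset.mem_insert, Finset.mem_singleton]
  omega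

lemma coln_eq_three {v : KVert n} (h : coln n v = 3) :
    4 ∈ vals v ∧ vals v ⊆ {1, 2, 4} := by
  have hc : 0 ∉ vals v ∧ 3 ∉ vals v ∧ (vals v).sup id = 4 := by
    unfold coln at h
    split_ifs at h <;> first | exact ⟨by assumption, by assumption, by assumption⟩ | omega
  have h4 : 4 ∈ vals v := by
    have := sup_mem_vals v
    rwa [hc.2.2] at this
  refine ⟨h4, fun a ha => ?_⟩
  have h1 : a ≤ (vals v).sup id := Finset.le_sup (f := id) ha
  have h2 : a ≠ 0 := fun h0 => hc.1 (h0 ▸ ha)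
  have h3 : a ≠ 3 := fun h0 => hc.2.1 (h0 ▸ ha)
  simp only [Finset.mem_insert, Finset.mem_singleton]
  omega

lemma coln_eq_four {v : KVert n} (h : coln n v = 4) : vals v = {3, 4} := by
  have hc : 3 ∈ vals v ∧ (vals v).sup id = 4 := by
    unfold coln at h
    split_ifs at h <;> first | exact ⟨by assumption, by assumption⟩ | omega
  have h4 : 4 ∈ vals v := by
    have := sup_mem_vals v
    rwa [hc.2] at this
  refine (Finset.eq_of_subset_of_card_le ?_ ?_).symm
  · intro a ha
    simp only [Finset.mem_insert, Finset.mem_singleton] at ha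
    rcases ha with rfl | rfl
    · exact hc.1
    · exact h4
  · rw [vals_card, Finset.card_pair (by omega)]

lemma coln_eq_five {v : KVert n} (h : coln n v = 5) : n - 1 ∈ vals v := by
  unfold coln at h
  split_ifs at h <;> first | assumption | omega

lemma coln_ge_six {v : KVert n} {c : ℕ} (h : coln n v = c) (hc : 6 ≤ c) :
    c - 1 ∈ vals v ∧ (vals v).sup id = c - 1 := by
  have hc' : (vals v).sup id + 1 = c := by
    unfold coln at h
    split_ifs at h <;> omega
  have := sup_mem_vals v
  constructor
  · rw [show c - 1 = (vals v).sup id by omega]; exact this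
  · omega

end Stmt12

-- chunk 2 : independence, nonemptiness, domination, upper bound
namespace Stmt12
open Finset
variable {n : ℕ}

lemma not_adj_of_common {u w : KVert n} {a : ℕ} (hu : a ∈ vals u) (hw : a ∈ vals w) :
    ¬ (KG2 n).Adj u w := by
  intro h
  have hd := disjoint_vals.mpr h
  exact Finset.disjoint_left.mp hd hu hw

lemma not_adj_of_bounded {u w : KVert n} {K : Finset ℕ} (hK : K.card = 3)
    (hu : vals u ⊆ K) (hw : vals w ⊆ K) : ¬ (KG2 n).Adj u w := by
  intro h
  have hd := disjoint_vals.mpr h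
  have hsub : vals u ∪ vals w ⊆ K := Finset.union_subset hu hw
  have hcard := Finset.card_le_card hsub
  rw [Finset.card_union_of_disjoint hd, vals_card, vals_card, hK] at hcard
  omega

lemma indep (hn : 6 ≤ n) {u w : KVert n} (h : coln n u = coln n w) :
    ¬ (KG2 n).Adj u w := by
  obtain ⟨c, hcu, hcw⟩ : ∃ c, coln n u = c ∧ coln n w = c := ⟨_, rfl, h.symm⟩
  rcases Nat.lt_or_ge c 6 with h6 | h6
  · interval_cases c
    · exact not_adj_of_common (coln_eq_zero hcu) (coln_eq_zero hcw)
    · exact not_adj_of_common (a := 0)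
        (by rw [coln_eq_one hn hcu]; simp)
        (by rw [coln_eq_one hn hcw]; simp)
    · exact not_adj_of_bounded (K := {1,2,3}) (by decide)
        (coln_eq_two hcu) (coln_eq_two hcw)
    · exact not_adj_of_common (coln_eq_three hcu).1 (coln_eq_three hcw).1
    · exact not_adj_of_common (a := 3)
        (by rw [coln_eq_four hcu]; simp)
        (by rw [coln_eq_four hcw]; simp)
    · exact not_adj_of_common (coln_eq_five hcu) (coln_eq_five hcw)
  · exact not_adj_of_common (coln_ge_six hcu h6).1 (coln_ge_six hcw h6).1

lemma coln_mkv (a b : ℕ) (ha : a < n) (hb : b < n) (hab : a ≠ b) :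
    coln n (mkv a b ha hb hab) =
      (if 0 = a ∨ 0 = b then (if n - 1 = a ∨ n - 1 = b then 1 else 0)
      else if n - 1 = a ∨ n - 1 = b then 5
      else if a ⊔ b ≤ 3 then 2
      else if a ⊔ b = 4 then (if 3 = a ∨ 3 = b then 4 else 3)
      else a ⊔ b + 1) := by
  unfold coln
  rw [vals_mkv]
  simp only [Finset.mem_insert, Finset.mem_singleton, Finset.sup_insert,
    Finset.sup_singleton, id_eq, eq_comm, sup_bot_eq]

lemma exists_mem_class (hn : 6 ≤ n) (c : ℕ) (hc : c < n) : ∃ v : KVert n, coln n v = c := by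
  rcases Nat.lt_or_ge c 6 with h6 | h6
  · interval_cases c
    · exact ⟨mkv 0 1 (by omega) (by omega) (by omega),
        by rw [coln_mkv]; split_ifs <;> first | omega | simp_all | (simp_all; omega)⟩
    · exact ⟨mkv 0 (n-1) (by omega) (by omega) (by omega),
        by rw [coln_mkv]; split_ifs <;> first | omega | simp_all | (simp_all; omega)⟩
    · exact ⟨mkv 1 2 (by omega) (by omega) (by omega),
        by rw [coln_mkv]; split_ifs <;> first | omega | simp_all | (simp_all; omega)⟩
    · exact ⟨mkv 1 4 (by omega) (by omega) (by omega),
        by rw [coln_mkv]; split_ifs <;> first | omega | simp_all | (simp_all; omega)⟩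
    · exact ⟨mkv 3 4 (by omega) (by omega) (by omega),
        by rw [coln_mkv]; split_ifs <;> first | omega | simp_all | (simp_all; omega)⟩
    · exact ⟨mkv 1 (n-1) (by omega) (by omega) (by omega),
        by rw [coln_mkv]; split_ifs <;> first | omega | simp_all | (simp_all; omega)⟩
  · exact ⟨mkv 1 (c-1) (by omega) (by omega) (by omega),
      by rw [coln_mkv]; split_ifs <;> first | omega | simp_all | (simp_all; omega)⟩

lemma pair_eq {v : KVert n} {a b : ℕ} (ha : a ∈ vals v) (hb : b ∈ vals v) (hab : a ≠ b) :
    vals v = {a, b} := by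
  refine (Finset.eq_of_subset_of_card_le ?_ ?_).symm
  · intro x hx
    simp only [Finset.mem_insert, Finset.mem_singleton] at hx
    rcases hx with rfl | rfl
    · exact ha
    · exact hb
  · rw [vals_card, Finset.card_pair hab]

lemma adj_of_val_disjoint {v u : KVert n} {K : Finset ℕ} (hu : vals u ⊆ K)
    (hd : ∀ a ∈ vals v, a ∉ K) : (KG2 n).Adj v u := by
  rw [adj_iff, ← disjoint_vals]
  rw [Finset.disjoint_left]
  intro a ha hau
  exact hd a ha (hu hau)

lemma dom (hn : 6 ≤ n) (v : KVert n) :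
    ∃ c : ℕ, c < n ∧ (∀ u : KVert n, coln n u = c → (KG2 n).Adj v u) := by
  by_cases h34 : 3 ∉ vals v ∧ 4 ∉ vals v
  · refine ⟨4, by omega, fun u hu => ?_⟩
    refine adj_of_val_disjoint (K := {3,4}) (by rw [coln_eq_four hu]) ?_
    intro a ha
    simp only [Finset.mem_insert, Finset.mem_singleton]
    rintro (rfl | rfl)
    · exact h34.1 ha
    · exact h34.2 ha
  · by_cases h0n : 0 ∉ vals v ∧ n - 1 ∉ vals v
    · refine ⟨1, by omega, fun u hu => ?_⟩
      refine adj_of_val_disjoint (K := {0, n-1}) (by rw [coln_eq_one hn hu]) ?_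
      intro a ha
      simp only [Finset.mem_insert, Finset.mem_singleton]
      rintro (rfl | rfl)
      · exact h0n.1 ha
      · exact h0n.2 ha
    · -- v contains one of {3,4} and one of {0, n-1}
      push_neg at h34 h0n
      have hy : ∃ y ∈ vals v, y = 0 ∨ y = n - 1 := by
        rcases Classical.em (0 ∈ vals v) with h | h
        · exact ⟨0, h, Or.inl rfl⟩
        · exact ⟨n-1, h0n h, Or.inr rfl⟩
      obtain ⟨y, hyv, hy0⟩ := hy
      by_cases h3 : 3 ∈ vals v
      · -- use class 3, union ⊆ {1,2,4}
        have hy3 : y ≠ 3 := by omega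
        have hvv := pair_eq h3 hyv (fun hh => hy3 hh.symm)
        refine ⟨3, by omega, fun u hu => ?_⟩
        refine adj_of_val_disjoint (K := {1,2,4}) (coln_eq_three hu).2 ?_
        intro a ha
        rw [hvv] at ha
        simp only [Finset.mem_insert, Finset.mem_singleton] at ha ⊢
        omega
      · have h4 : 4 ∈ vals v := h34 h3
        have hy4 : y ≠ 4 := by omega
        have hvv := pair_eq h4 hyv (fun hh => hy4 hh.symm)
        refine ⟨2, by omega, fun u hu => ?_⟩
        refine adj_of_val_disjoint (K := {1,2,3}) (coln_eq_two hu) ?_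
        intro a ha
        rw [hvv] at ha
        simp only [Finset.mem_insert, Finset.mem_singleton] at ha ⊢
        omega

theorem upper (hn : 6 ≤ n) : ∃ C : Fin n → Set (KVert n), IsTDColoring (KG2 n) C := by
  refine ⟨fun i => {v | coln n v = i.1}, ⟨⟨fun v => ?_, fun i => ?_, fun i u hu w hw => ?_⟩,
    fun v => ?_⟩⟩
  · refine ⟨⟨coln n v, coln_lt hn v⟩, rfl, fun j hj => ?_⟩
    exact Fin.ext (by simpa using hj.symm)
  · obtain ⟨v, hv⟩ := exists_mem_class hn i.1 i.2
    exact ⟨v, hv⟩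
  · exact indep hn (by simp only [Set.mem_setOf_eq] at hu hw; rw [hu, hw])
  · obtain ⟨c, hc, hdom⟩ := dom hn v
    refine ⟨⟨c, hc⟩, ?_, fun u hu => hdom u hu⟩
    obtain ⟨w, hw⟩ := exists_mem_class hn c hc
    exact ⟨w, hw⟩

end Stmt12

-- chunk 3 : classification of independent sets
namespace Stmt12
open Finset
variable {n : ℕ}

/-- make a vertex from two distinct elements of `Fin n` -/
def vert (x y : Fin n) (h : x ≠ y) : KVert n := ⟨{x, y}, Finset.card_pair h⟩

lemma vert_fst (x y : Fin n) (h : x ≠ y) : (vert x y h).1 = {x, y} := rfl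

lemma other_elt {v : KVert n} {z : Fin n} (hz : z ∈ v.1) :
    ∃ x : Fin n, x ≠ z ∧ v.1 = {z, x} := by
  obtain ⟨p, q, hpq, hv⟩ := Finset.card_eq_two.mp v.2
  rw [hv] at hz
  simp only [Finset.mem_insert, Finset.mem_singleton] at hz
  rcases hz with rfl | rfl
  · exact ⟨q, fun h => hpq h.symm, hv⟩
  · exact ⟨p, fun h => hpq h, by rw [hv, Finset.pair_comm]⟩

lemma classify {F : Set (KVert n)} (hF : F.Nonempty)
    (hmeet : ∀ u ∈ F, ∀ w ∈ F, ¬ Disjoint u.1 w.1)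
    (hnostar : ¬ ∃ a : Fin n, ∀ v ∈ F, a ∈ v.1) :
    ∃ A : Finset (Fin n), A.card = 3 ∧ ∀ v : KVert n, v ∈ F ↔ v.1 ⊆ A := by
  push_neg at hnostar
  obtain ⟨v0, hv0⟩ := hF
  obtain ⟨a, b, hab, hv0ab⟩ := Finset.card_eq_two.mp v0.2
  -- a vertex avoiding a
  obtain ⟨v1, hv1, ha1⟩ := hnostar a
  have hbv1 : b ∈ v1.1 := by
    have := hmeet v0 hv0 v1 hv1
    rw [Finset.not_disjoint_iff] at this
    obtain ⟨c, hc0, hc1⟩ := this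
    rw [hv0ab] at hc0
    simp only [Finset.mem_insert, Finset.mem_singleton] at hc0
    rcases hc0 with rfl | rfl
    · exact absurd hc1 ha1
    · exact hc1
  obtain ⟨c, hcb, hv1bc⟩ := other_elt hbv1
  have hca : c ≠ a := by
    intro h
    subst h
    exact ha1 (by rw [hv1bc]; simp)
  -- a vertex avoiding b
  obtain ⟨v2, hv2, hb2⟩ := hnostar b
  have hav2 : a ∈ v2.1 := by
    have := hmeet v0 hv0 v2 hv2
    rw [Finset.not_disjoint_iff] at this
    obtain ⟨d, hd0, hd2⟩ := this
    rw [hv0ab] at hd0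
    simp only [Finset.mem_insert, Finset.mem_singleton] at hd0
    rcases hd0 with rfl | rfl
    · exact hd2
    · exact absurd hd2 hb2
  have hcv2 : c ∈ v2.1 := by
    have := hmeet v1 hv1 v2 hv2
    rw [Finset.not_disjoint_iff] at this
    obtain ⟨d, hd1, hd2⟩ := this
    rw [hv1bc] at hd1
    simp only [Finset.mem_insert, Finset.mem_singleton] at hd1
    rcases hd1 with rfl | rfl
    · exact absurd hd2 hb2
    · exact hd2
  have hv2ac : v2.1 = {a, c} := by
    refine (Finset.eq_of_subset_of_card_le ?_ ?_).symm
    · intro x hx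
      simp only [Finset.mem_insert, Finset.mem_singleton] at hx
      rcases hx with rfl | rfl
      · exact hav2
      · exact hcv2
    · rw [v2.2, Finset.card_pair (Ne.symm hca)]
  refine ⟨{a, b, c}, ?_, fun v => ⟨fun hv => ?_, fun hv => ?_⟩⟩
  · have hanm : a ∉ ({b, c} : Finset (Fin n)) := by
      simp only [Finset.mem_insert, Finset.mem_singleton]
      push_neg
      exact ⟨hab, Ne.symm hca⟩
    rw [Finset.card_insert_of_notMem hanm, Finset.card_pair (Ne.symm hcb)]
  · -- any member is inside {a,b,c}
    intro x hx
    by_contra hxA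
    simp only [Finset.mem_insert, Finset.mem_singleton] at hxA
    push_neg at hxA
    obtain ⟨hxa, hxb, hxc⟩ := hxA
    obtain ⟨y, hyx, hvxy⟩ := other_elt hx
    -- v meets v0, v1, v2 in an element ≠ x, hence = y
    have hy : ∀ w : KVert n, w ∈ F → w.1 ⊆ ({a,b,c} : Finset (Fin n)) → y ∈ w.1 := by
      intro w hw hwsub
      have := hmeet v hv w hw
      rw [Finset.not_disjoint_iff] at this
      obtain ⟨d, hdv, hdw⟩ := this
      rw [hvxy] at hdv
      simp only [Finset.mem_insert, Finset.mem_singleton] at hdv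
      rcases hdv with rfl | rfl
      · -- d = x : but x ∉ {a,b,c}
        have := hwsub hdw
        simp only [Finset.mem_insert, Finset.mem_singleton] at this
        tauto
      · exact hdw
    have hy0 : y ∈ v0.1 := by
      refine hy v0 hv0 ?_
      rw [hv0ab]
      intro u hu
      simp only [Finset.mem_insert, Finset.mem_singleton] at hu ⊢
      tauto
    have hy1 : y ∈ v1.1 := by
      refine hy v1 hv1 ?_
      rw [hv1bc]
      intro u hu
      simp only [Finset.mem_insert, Finset.mem_singleton] at hu ⊢
      tauto
    have hy2 : y ∈ v2.1 := by
      refine hy v2 hv2 ?_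
      rw [hv2ac]
      intro u hu
      simp only [Finset.mem_insert, Finset.mem_singleton] at hu ⊢
      tauto
    rw [hv0ab] at hy0
    rw [hv1bc] at hy1
    rw [hv2ac] at hy2
    simp only [Finset.mem_insert, Finset.mem_singleton] at hy0 hy1 hy2
    rcases hy0 with rfl | rfl
    · rcases hy1 with h | h
      · exact hab h
      · exact hca h.symm
    · rcases hy2 with h | h
      · exact hab h.symm
      · exact hcb h.symm
  · -- any 2-subset of {a,b,c} is a member
    obtain ⟨p, q, hpq, hvpq⟩ := Finset.card_eq_two.mp v.2
    have hp : p ∈ ({a,b,c} : Finset (Fin n)) := hv (by rw [hvpq]; simp)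
    have hq : q ∈ ({a,b,c} : Finset (Fin n)) := hv (by rw [hvpq]; simp)
    simp only [Finset.mem_insert, Finset.mem_singleton] at hp hq
    have hsame : ∀ w : KVert n, w ∈ F → v.1 = w.1 → v ∈ F := by
      intro w hw hvw
      have : v = w := Subtype.ext hvw
      rw [this]; exact hw
    rcases hp with rfl | rfl | rfl <;> rcases hq with rfl | rfl | rfl
    · exact absurd rfl hpq
    · exact hsame v0 hv0 (by rw [hvpq, hv0ab])
    · exact hsame v2 hv2 (by rw [hvpq, hv2ac])
    · exact hsame v0 hv0 (by rw [hvpq, hv0ab, Finset.pair_comm])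
    · exact absurd rfl hpq
    · exact hsame v1 hv1 (by rw [hvpq, hv1bc])
    · exact hsame v2 hv2 (by rw [hvpq, hv2ac, Finset.pair_comm])
    · exact hsame v1 hv1 (by rw [hvpq, hv1bc, Finset.pair_comm])
    · exact absurd rfl hpq

end Stmt12

-- chunk 4 : lower bound
namespace Stmt12
open Finset
variable {n : ℕ}

/-- total version of `vert` -/
def vmk (hn : 6 ≤ n) (x y : Fin n) : KVert n :=
  if h : y = x then vert ⟨0, by omega⟩ ⟨1, by omega⟩ (by simp [Fin.ext_iff])
  else vert x y (fun hh => h hh.symm)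

lemma vmk_fst (hn : 6 ≤ n) {x y : Fin n} (h : y ≠ x) : (vmk hn x y).1 = {x, y} := by
  rw [vmk, dif_neg h]; rfl

lemma card_subpairs (W : Finset (Fin n)) :
    ((univ : Finset (KVert n)).filter fun v => v.1 ⊆ W).card = W.card.choose 2 := by
  classical
  rw [← Finset.card_powersetCard 2 W]
  apply Finset.card_bij (fun v _ => v.1)
  · intro v hv
    rw [Finset.mem_powersetCard]
    exact ⟨(Finset.mem_filter.mp hv).2, v.2⟩
  · intro u hu v hv h
    exact Subtype.ext h
  · intro s hs
    rw [Finset.mem_powersetCard] at hs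
    exact ⟨⟨s, hs.2⟩, Finset.mem_filter.mpr ⟨Finset.mem_univ _, hs.1⟩, rfl⟩

theorem lower {n k : ℕ} (hn : 6 ≤ n) (hk : k ≤ n - 1) (C : Fin k → Set (KVert n))
    (htd : IsTDColoring (KG2 n) C) : False := by
  classical
  obtain ⟨⟨huniq, hne, hind⟩, hdom⟩ := htd
  have hmeet : ∀ i, ∀ u ∈ C i, ∀ w ∈ C i, ¬ Disjoint u.1 w.1 :=
    fun i u hu w hw => hind i u hu w hw
  choose cl hclmem using fun v => (huniq v).exists
  have hcleq : ∀ {v : KVert n} {i}, v ∈ C i → cl v = i :=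
    fun {v i} h => (huniq v).unique (hclmem v) h
  set SP : Fin k → Prop := fun i => ∃ a : Fin n, ∀ v ∈ C i, a ∈ v.1 with hSP
  have hctr' : ∀ i, ∃ a : Fin n, SP i → ∀ v ∈ C i, a ∈ v.1 := by
    intro i
    by_cases h : SP i
    · obtain ⟨a, ha⟩ := h
      exact ⟨a, fun _ => ha⟩
    · exact ⟨⟨0, by omega⟩, fun hh => absurd hh h⟩
  choose ctr hctr using hctr'
  have hA' : ∀ i, ∃ A : Finset (Fin n),
      ¬ SP i → A.card = 3 ∧ ∀ v : KVert n, v ∈ C i ↔ v.1 ⊆ A := by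
    intro i
    by_cases h : SP i
    · exact ⟨∅, fun hh => absurd h hh⟩
    · obtain ⟨A, h1, h2⟩ := classify (hne i) (hmeet i) h
      exact ⟨A, fun _ => ⟨h1, h2⟩⟩
  choose A hA using hA'
  set stars : Finset (Fin k) := univ.filter SP with hstars
  set tris : Finset (Fin k) := univ.filter (fun i => ¬ SP i) with htris
  set Z : Finset (Fin n) := univ \ stars.image ctr with hZdef
  set t := tris.card with ht
  set m := Z.card with hm
  have htrimem : ∀ {i}, i ∈ tris → ¬ SP i := by
    intro i hi
    exact (Finset.mem_filter.mp hi).2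
  have hmemA : ∀ {i}, i ∈ tris → ∀ {v : KVert n}, (v ∈ C i ↔ v.1 ⊆ A i) :=
    fun {i} hi {v} => (hA i (htrimem hi)).2 v
  have hcardA : ∀ {i}, i ∈ tris → (A i).card = 3 :=
    fun {i} hi => (hA i (htrimem hi)).1
  have hZcl : ∀ {v : KVert n}, v.1 ⊆ Z → cl v ∈ tris := by
    intro v hv
    rw [htris, Finset.mem_filter]
    refine ⟨Finset.mem_univ _, fun hsp => ?_⟩
    have h1 : ctr (cl v) ∈ v.1 := hctr _ hsp _ (hclmem v)
    have h2 := hv h1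
    rw [hZdef, Finset.mem_sdiff] at h2
    exact h2.2 (Finset.mem_image.mpr ⟨cl v,
      by rw [hstars, Finset.mem_filter]; exact ⟨Finset.mem_univ _, hsp⟩, rfl⟩)
  have hpair : ∀ i ∈ tris, ∀ j ∈ tris, i ≠ j → (A i ∩ A j).card ≤ 1 := by
    intro i hi j hj hij
    by_contra hlt
    push_neg at hlt
    obtain ⟨x, hx, y, hy, hxy⟩ := Finset.one_lt_card.mp hlt
    have hxj := Finset.mem_inter.mp hx
    have hyj := Finset.mem_inter.mp hy
    have hsub1 : (vert x y hxy).1 ⊆ A i := by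
      rw [vert_fst]
      intro u hu
      simp only [Finset.mem_insert, Finset.mem_singleton] at hu
      rcases hu with rfl | rfl
      · exact hxj.1
      · exact hyj.1
    have hsub2 : (vert x y hxy).1 ⊆ A j := by
      rw [vert_fst]
      intro u hu
      simp only [Finset.mem_insert, Finset.mem_singleton] at hu
      rcases hu with rfl | rfl
      · exact hxj.2
      · exact hyj.2
    have h1 := hcleq ((hmemA hi).mpr hsub1)
    have h2 := hcleq ((hmemA hj).mpr hsub2)
    exact hij (h1 ▸ h2 ▸ rfl)
  -- ====== theta lower bound ======
  have hθ2 : ∀ z ∈ Z, 2 ≤ (tris.filter (fun i => z ∈ A i)).card := by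
    intro z hz
    have hz' : z ∈ (univ : Finset (Fin n)) \ stars.image ctr := by rwa [hZdef] at hz
    have hznc : z ∉ stars.image ctr := (Finset.mem_sdiff.mp hz').2
    set θ := (tris.filter (fun i => z ∈ A i)).card with hθdef
    set f : Fin n → Fin k := fun x => cl (vmk hn z x) with hfdef
    set Pz := (univ : Finset (Fin n)).erase z with hPzdef
    have hPzcard : Pz.card = n - 1 := by
      rw [hPzdef, Finset.card_erase_of_mem (Finset.mem_univ _), Finset.card_univ,
        Fintype.card_fin]
    set Q := Pz.filter (fun x => f x ∈ stars) with hQdef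
    set R := Pz.filter (fun x => f x ∉ stars) with hRdef
    have hQR : Q.card + R.card = n - 1 := by
      rw [hQdef, hRdef, Finset.card_filter_add_card_filter_not, hPzcard]
    have hvmk1 : ∀ x ∈ Pz, (vmk hn z x).1 = {z, x} := by
      intro x hx
      exact vmk_fst hn (Finset.ne_of_mem_erase hx)
    have hzmem : ∀ x ∈ Pz, z ∈ (vmk hn z x).1 := by
      intro x hx; rw [hvmk1 x hx]; simp
    have hstar_tri : ∀ i : Fin k, i ∉ stars → i ∈ tris := by
      intro i hi
      rw [htris, Finset.mem_filter]
      refine ⟨Finset.mem_univ _, fun hsp => hi ?_⟩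
      rw [hstars, Finset.mem_filter]
      exact ⟨Finset.mem_univ _, hsp⟩
    have hQcard : Q.card = (stars.filter (fun i => ∃ v ∈ C i, z ∈ v.1)).card := by
      apply Finset.card_bij (fun x _ => f x)
      · intro x hx
        obtain ⟨hxP, hxs⟩ := Finset.mem_filter.mp hx
        exact Finset.mem_filter.mpr ⟨hxs, vmk hn z x, hclmem _, hzmem x hxP⟩
      · intro x1 hx1 x2 hx2 heq
        obtain ⟨hP1, hs1⟩ := Finset.mem_filter.mp hx1
        obtain ⟨hP2, hs2⟩ := Finset.mem_filter.mp hx2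
        have hsp1 : SP (f x1) := (Finset.mem_filter.mp hs1).2
        have hc1 : ctr (f x1) ∈ (vmk hn z x1).1 := hctr _ hsp1 _ (hclmem _)
        have hc2 : ctr (f x1) ∈ (vmk hn z x2).1 := by
          rw [heq]
          exact hctr _ (heq ▸ hsp1) _ (hclmem _)
        rw [hvmk1 x1 hP1] at hc1
        rw [hvmk1 x2 hP2] at hc2
        simp only [Finset.mem_insert, Finset.mem_singleton] at hc1 hc2
        have hcnz : ctr (f x1) ≠ z := by
          intro hh
          exact hznc (Finset.mem_image.mpr ⟨f x1, hs1, hh⟩)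
        rcases hc1 with h1 | h1
        · exact absurd h1 hcnz
        · rcases hc2 with h2 | h2
          · exact absurd h2 hcnz
          · rw [← h1, ← h2]
      · intro i hi
        obtain ⟨his, v, hvC, hzv⟩ := Finset.mem_filter.mp hi
        obtain ⟨x, hxz, hvzx⟩ := other_elt hzv
        have hxP : x ∈ Pz := Finset.mem_erase.mpr ⟨hxz, Finset.mem_univ _⟩
        have hveq : vmk hn z x = v := Subtype.ext (by rw [hvmk1 x hxP, hvzx])
        have hfx : f x = i := by
          have : cl (vmk hn z x) = i := by rw [hveq]; exact hcleq hvC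
          exact this
        refine ⟨x, Finset.mem_filter.mpr ⟨hxP, ?_⟩, hfx⟩
        rw [hfx]; exact his
    have hτ : R.card ≤ 2 * θ := by
      have hRtri : ∀ x ∈ R, f x ∈ tris ∧ (vmk hn z x).1 ⊆ A (f x) := by
        intro x hx
        obtain ⟨hxP, hxns⟩ := Finset.mem_filter.mp hx
        have htri := hstar_tri _ hxns
        exact ⟨htri, (hmemA htri).mp (hclmem _)⟩
      have himg : R.image f ⊆ tris.filter (fun i => z ∈ A i) := by
        intro i hi
        obtain ⟨x, hx, rfl⟩ := Finset.mem_image.mp hi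
        obtain ⟨htri, hsub⟩ := hRtri x hx
        exact Finset.mem_filter.mpr ⟨htri, hsub (hzmem x (Finset.mem_filter.mp hx).1)⟩
      have h1 : R.card ≤ 2 * (R.image f).card := by
        apply Finset.card_le_mul_card_image
        intro i hi
        obtain ⟨x0, hx0, rfl⟩ := Finset.mem_image.mp hi
        obtain ⟨htri0, hsub0⟩ := hRtri x0 hx0
        have hsubfib : R.filter (fun x => f x = f x0) ⊆ (A (f x0)).erase z := by
          intro x hx
          obtain ⟨hxR, hfx⟩ := Finset.mem_filter.mp hx
          obtain ⟨htri, hsub⟩ := hRtri x hxR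
          have hxP := (Finset.mem_filter.mp hxR).1
          refine Finset.mem_erase.mpr ⟨Finset.ne_of_mem_erase hxP, ?_⟩
          rw [← hfx]
          refine hsub ?_
          rw [hvmk1 x hxP]; simp
        have hzA : z ∈ A (f x0) := hsub0 (hzmem x0 (Finset.mem_filter.mp hx0).1)
        calc (R.filter (fun x => f x = f x0)).card
            ≤ ((A (f x0)).erase z).card := Finset.card_le_card hsubfib
          _ = 2 := by rw [Finset.card_erase_of_mem hzA, hcardA htri0]
      have h2 : (R.image f).card ≤ θ := by
        rw [hθdef]; exact Finset.card_le_card himg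
      omega
    set W := (univ : Finset (Fin k)).filter (fun i => ∃ v ∈ C i, z ∈ v.1) with hWdef
    set Fz := (univ : Finset (Fin k)).filter (fun i => ¬ ∃ v ∈ C i, z ∈ v.1) with hFzdef
    have hWF : W.card + Fz.card = k := by
      rw [hWdef, hFzdef, Finset.card_filter_add_card_filter_not,
        Finset.card_univ, Fintype.card_fin]
    have hWsplit : W.card = Q.card + θ := by
      have e0 : (W.filter SP).card + (W.filter (fun i => ¬ SP i)).card = W.card :=
        Finset.card_filter_add_card_filter_not SP
      have e1 : W.filter SP = stars.filter (fun i => ∃ v ∈ C i, z ∈ v.1) := by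
        ext i
        simp only [hWdef, hstars, Finset.mem_filter, Finset.mem_univ, true_and]
        tauto
      have e2 : W.filter (fun i => ¬ SP i) = tris.filter (fun i => z ∈ A i) := by
        ext i
        simp only [hWdef, htris, Finset.mem_filter, Finset.mem_univ, true_and]
        constructor
        · rintro ⟨⟨v, hvC, hzv⟩, hns⟩
          have htri : i ∈ tris := by
            rw [htris, Finset.mem_filter]; exact ⟨Finset.mem_univ _, hns⟩
          exact ⟨hns, (hmemA htri).mp hvC hzv⟩
        · rintro ⟨hns, hzA⟩
          have htri : i ∈ tris := by
            rw [htris, Finset.mem_filter]; exact ⟨Finset.mem_univ _, hns⟩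
          have hciA := hcardA htri
          obtain ⟨y, hyA, hyz⟩ := Finset.exists_mem_ne (s := A i) (by omega) z
          have hv : vmk hn z y ∈ C i := by
            refine (hmemA htri).mpr ?_
            rw [vmk_fst hn hyz]
            intro u hu
            simp only [Finset.mem_insert, Finset.mem_singleton] at hu
            rcases hu with rfl | rfl
            · exact hzA
            · exact hyA
          refine ⟨⟨vmk hn z y, hv, ?_⟩, hns⟩
          rw [vmk_fst hn hyz]; simp
      rw [← e0, e1, e2, ← hQcard, ← hθdef]
    have hF2 : 2 ≤ Fz.card := by
      have hPzne : Pz.Nonempty := by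
        rw [← Finset.card_pos]; omega
      obtain ⟨x0, hx0⟩ := hPzne
      obtain ⟨i0, hne0, hdom0⟩ := hdom (vmk hn z x0)
      have hFmem : ∀ (x : Fin n), x ∈ Pz → ∀ (i : Fin k),
          (∀ u ∈ C i, (KG2 n).Adj (vmk hn z x) u) → i ∈ Fz := by
        intro x hx i hdomi
        rw [hFzdef, Finset.mem_filter]
        refine ⟨Finset.mem_univ _, ?_⟩
        rintro ⟨u, huC, hzu⟩
        have hadj : Disjoint (vmk hn z x).1 u.1 := hdomi u huC
        exact Finset.disjoint_left.mp hadj (hzmem x hx) hzu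
      have hi0F : i0 ∈ Fz := hFmem x0 hx0 i0 hdom0
      obtain ⟨u0, hu0⟩ := hne0
      have hu0ne : u0.1.Nonempty := by
        rw [← Finset.card_pos, u0.2]; omega
      obtain ⟨y, hy⟩ := hu0ne
      have hyz : y ≠ z := by
        intro hh
        rw [hFzdef, Finset.mem_filter] at hi0F
        exact hi0F.2 ⟨u0, hu0, hh ▸ hy⟩
      have hyP : y ∈ Pz := Finset.mem_erase.mpr ⟨hyz, Finset.mem_univ _⟩
      obtain ⟨i1, hne1, hdom1⟩ := hdom (vmk hn z y)
      have hi1F : i1 ∈ Fz := hFmem y hyP i1 hdom1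
      have hne01 : i0 ≠ i1 := by
        intro heq
        have hadj : Disjoint (vmk hn z y).1 u0.1 := hdom1 u0 (heq ▸ hu0)
        refine Finset.disjoint_left.mp hadj ?_ hy
        rw [hvmk1 y hyP]; simp
      calc 2 = ({i0, i1} : Finset (Fin k)).card := (Finset.card_pair hne01).symm
        _ ≤ Fz.card := by
            refine Finset.card_le_card ?_
            intro j hj
            simp only [Finset.mem_insert, Finset.mem_singleton] at hj
            rcases hj with rfl | rfl
            · exact hi0F
            · exact hi1F
    omega
  -- ====== global counting ======
  have hsum_theta : ∑ z ∈ Z, (tris.filter (fun i => z ∈ A i)).card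
      = ∑ i ∈ tris, (A i ∩ Z).card := by
    have e1 : ∀ z ∈ Z, (tris.filter (fun i => z ∈ A i)).card
        = ∑ i ∈ tris, if z ∈ A i then 1 else 0 := fun z _ => Finset.card_filter _ _
    rw [Finset.sum_congr rfl e1, Finset.sum_comm]
    refine Finset.sum_congr rfl (fun i _ => ?_)
    rw [← Finset.card_filter, Finset.filter_mem_eq_inter, Finset.inter_comm]
  have h2m : 2 * m ≤ ∑ i ∈ tris, (A i ∩ Z).card := by
    have h := Finset.card_nsmul_le_sum Z
      (fun z => (tris.filter (fun i => z ∈ A i)).card) 2 hθ2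
    rw [hsum_theta, smul_eq_mul] at h
    omega
  set B := tris.filter (fun i => A i ⊆ Z) with hB
  set NB := tris.filter (fun i => ¬ A i ⊆ Z) with hNB
  set b := B.card with hbdef
  set nb := NB.card with hnb
  have hbnb : b + nb = t := by
    have h := Finset.card_filter_add_card_filter_not
      (s := tris) (p := fun i => A i ⊆ Z)
    rw [← hB, ← hNB] at h
    omega
  have hikey : ∀ i ∈ tris, (A i ∩ Z).card ≤ 3 ∧ (¬ A i ⊆ Z → (A i ∩ Z).card ≤ 2) := by
    intro i hi
    have hc3 := hcardA hi
    constructor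
    · calc (A i ∩ Z).card ≤ (A i).card := Finset.card_le_card Finset.inter_subset_left
        _ = 3 := hc3
    · intro hns
      have hss : A i ∩ Z ⊂ A i := by
        refine Finset.ssubset_iff_subset_ne.mpr ⟨Finset.inter_subset_left, fun h => hns ?_⟩
        rw [← Finset.inter_eq_left]
        exact h
      have := Finset.card_lt_card hss
      omega
  have hsum2 : ∑ i ∈ tris, (A i ∩ Z).card ≤ 3 * b + 2 * nb := by
    have hsplit := Finset.sum_filter_add_sum_filter_not tris (fun i => A i ⊆ Z)
      (fun i => (A i ∩ Z).card)
    rw [← hB, ← hNB] at hsplit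
    have h1 : ∑ i ∈ B, (A i ∩ Z).card ≤ B.card • 3 := by
      refine Finset.sum_le_card_nsmul _ _ 3 (fun i hi => ?_)
      rw [hB] at hi
      exact (hikey i (Finset.mem_filter.mp hi).1).1
    have h2 : ∑ i ∈ NB, (A i ∩ Z).card ≤ NB.card • 2 := by
      refine Finset.sum_le_card_nsmul _ _ 2 (fun i hi => ?_)
      rw [hNB] at hi
      exact (hikey i (Finset.mem_filter.mp hi).1).2 (Finset.mem_filter.mp hi).2
    rw [smul_eq_mul] at h1 h2
    omega
  have hchoose : m.choose 2 = ∑ i ∈ tris, ((A i ∩ Z).card).choose 2 := by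
    have h1 := card_subpairs (n := n) Z
    have h2 : ((univ : Finset (KVert n)).filter fun v => v.1 ⊆ Z).card
        = ∑ i ∈ tris, ((A i ∩ Z).card).choose 2 := by
      rw [Finset.card_eq_sum_card_fiberwise (f := cl) (t := tris)
        (fun v hv => hZcl (Finset.mem_filter.mp hv).2)]
      refine Finset.sum_congr rfl (fun i hi => ?_)
      rw [← card_subpairs (A i ∩ Z)]
      congr 1
      ext v
      simp only [Finset.mem_filter, Finset.mem_univ, true_and, Finset.subset_inter_iff]
      constructor
      · rintro ⟨hvZ, hcl⟩
        exact ⟨(hmemA hi).mp (hcl ▸ hclmem v), hvZ⟩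
      · rintro ⟨hvA, hvZ⟩
        exact ⟨hvZ, hcleq ((hmemA hi).mpr hvA)⟩
    rw [hm, ← h1, h2]
  have hsum4 : ∑ i ∈ tris, ((A i ∩ Z).card).choose 2 ≤ 3 * b + nb := by
    have hsplit := Finset.sum_filter_add_sum_filter_not tris (fun i => A i ⊆ Z)
      (fun i => ((A i ∩ Z).card).choose 2)
    rw [← hB, ← hNB] at hsplit
    have h1 : ∑ i ∈ B, ((A i ∩ Z).card).choose 2 ≤ B.card • 3 := by
      refine Finset.sum_le_card_nsmul _ _ 3 (fun i hi => ?_)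
      rw [hB] at hi
      have h := (hikey i (Finset.mem_filter.mp hi).1).1
      calc ((A i ∩ Z).card).choose 2 ≤ (3:ℕ).choose 2 := Nat.choose_le_choose 2 h
        _ = 3 := by decide
    have h2 : ∑ i ∈ NB, ((A i ∩ Z).card).choose 2 ≤ NB.card • 1 := by
      refine Finset.sum_le_card_nsmul _ _ 1 (fun i hi => ?_)
      rw [hNB] at hi
      have h := (hikey i (Finset.mem_filter.mp hi).1).2 (Finset.mem_filter.mp hi).2
      calc ((A i ∩ Z).card).choose 2 ≤ (2:ℕ).choose 2 := Nat.choose_le_choose 2 h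
        _ = 1 := by decide
    rw [smul_eq_mul] at h1 h2
    omega
  have hm1 : t + 1 ≤ m := by
    have h1 : Z.card + (stars.image ctr).card = n := by
      have h := Finset.card_sdiff_add_card_eq_card (Finset.subset_univ (stars.image ctr))
      rw [Finset.card_univ, Fintype.card_fin] at h
      rw [hZdef]
      exact h
    have h2 : (stars.image ctr).card ≤ stars.card := Finset.card_image_le
    have h3 : stars.card + tris.card = k := by
      rw [hstars, htris, Finset.card_filter_add_card_filter_not,
        Finset.card_univ, Fintype.card_fin]
    omega
  have hb2 : 2 ≤ b := by omega
  have hm5 : 5 ≤ m := by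
    obtain ⟨i1, hi1, i2, hi2, h12⟩ := Finset.one_lt_card.mp (show 1 < B.card by omega)
    have m1 := Finset.mem_filter.mp hi1
    have m2 := Finset.mem_filter.mp hi2
    have hu : A i1 ∪ A i2 ⊆ Z := Finset.union_subset m1.2 m2.2
    have hcu := Finset.card_union_add_card_inter (A i1) (A i2)
    rw [hcardA m1.1, hcardA m2.1] at hcu
    have hint := hpair i1 m1.1 i2 m2.1 h12
    have hle := Finset.card_le_card hu
    omega
  have ht5 : t ≤ 5 := by
    have hcc := Nat.choose_le_choose 2 hm1
    have h2' : (t+1).choose 2 = (t+1) * t / 2 := by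
      rw [Nat.choose_two_right, Nat.add_sub_cancel]
    by_contra hgt
    push_neg at hgt
    have h1 : 7 * t ≤ (t+1) * t := Nat.mul_le_mul_right t (by omega)
    have h3 : 7 * t / 2 ≤ (t+1) * t / 2 := Nat.div_le_div_right h1
    omega
  have hm7 : m ≤ 7 := by omega
  have hmval : m = 5 ∨ m = 6 ∨ m = 7 := by omega
  rcases hmval with h5 | h6 | h7
  · -- m = 5
    have h10 : (5:ℕ).choose 2 = 10 := by decide
    rw [h5, h10] at hchoose
    have hb3 : 2 < B.card := by omega
    obtain ⟨i1, i2, i3, hi1, hi2, hi3, h12, h13, h23⟩ := Finset.two_lt_card_iff.mp hb3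
    have m1 := Finset.mem_filter.mp hi1
    have m2 := Finset.mem_filter.mp hi2
    have m3 := Finset.mem_filter.mp hi3
    have hu : A i1 ∪ A i2 ⊆ Z := Finset.union_subset m1.2 m2.2
    have hcu := Finset.card_union_add_card_inter (A i1) (A i2)
    rw [hcardA m1.1, hcardA m2.1] at hcu
    have hint := hpair i1 m1.1 i2 m2.1 h12
    have hle := Finset.card_le_card hu
    have hZeq : A i1 ∪ A i2 = Z := Finset.eq_of_subset_of_card_le hu (by omega)
    have hsub3 : A i3 ⊆ A i1 ∪ A i2 := by rw [hZeq]; exact m3.2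
    have hdecomp : A i3 = (A i3 ∩ A i1) ∪ (A i3 ∩ A i2) := by
      rw [← Finset.inter_union_distrib_left, Finset.inter_eq_left.mpr hsub3]
    have hle3 := Finset.card_union_le (A i3 ∩ A i1) (A i3 ∩ A i2)
    have c1 := hpair i3 m3.1 i1 m1.1 (fun h => h13 h.symm)
    have c2 := hpair i3 m3.1 i2 m2.1 (fun h => h23 h.symm)
    have hA3 := hcardA m3.1
    rw [← hdecomp] at hle3
    omega
  · -- m = 6 : parity
    have h15 : (6:ℕ).choose 2 = 15 := by decide
    rw [h6, h15] at hchoose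
    have hBt : B = tris := by
      refine Finset.eq_of_subset_of_card_le (Finset.filter_subset _ _) ?_
      omega
    have hallsub : ∀ i ∈ tris, A i ⊆ Z := by
      intro i hi
      rw [← hBt] at hi
      exact (Finset.mem_filter.mp hi).2
    have hZne : Z.Nonempty := by
      rw [← Finset.card_pos]; omega
    obtain ⟨x, hx⟩ := hZne
    set Px := Z.erase x with hPxdef
    have hPxcard : Px.card = 5 := by
      rw [hPxdef, Finset.card_erase_of_mem hx]; omega
    set T := tris.filter (fun i => x ∈ A i) with hTdef
    set g : Fin n → Fin k := fun y => cl (vmk hn x y) with hgdef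
    have hmap : ∀ y ∈ Px, g y ∈ T := by
      intro y hy
      have hyx : y ≠ x := Finset.ne_of_mem_erase hy
      have hyZ : y ∈ Z := Finset.mem_of_mem_erase hy
      have hfst : (vmk hn x y).1 = {x, y} := vmk_fst hn hyx
      have hsubZ : (vmk hn x y).1 ⊆ Z := by
        rw [hfst]
        intro u hu
        simp only [Finset.mem_insert, Finset.mem_singleton] at hu
        rcases hu with rfl | rfl
        · exact hx
        · exact hyZ
      have htri := hZcl hsubZ
      refine Finset.mem_filter.mpr ⟨htri, ?_⟩
      have hsubA := (hmemA htri).mp (hclmem _)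
      refine hsubA ?_
      rw [hfst]; simp
    have hfib := Finset.card_eq_sum_card_fiberwise hmap
    have hfib2 : ∀ i ∈ T, (Px.filter (fun y => g y = i)).card = 2 := by
      intro i hi
      have hiT := Finset.mem_filter.mp hi
      have hfeq : Px.filter (fun y => g y = i) = (A i).erase x := by
        ext y
        simp only [Finset.mem_filter, Finset.mem_erase]
        constructor
        · rintro ⟨hyPx, hgy⟩
          have hyx : y ≠ x := Finset.ne_of_mem_erase hyPx
          have hfst : (vmk hn x y).1 = {x, y} := vmk_fst hn hyx
          have hvC : vmk hn x y ∈ C i := hgy ▸ hclmem _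
          have hsub := (hmemA hiT.1).mp hvC
          refine ⟨hyx, hsub ?_⟩
          rw [hfst]; simp
        · rintro ⟨hyx, hyA⟩
          have hfst : (vmk hn x y).1 = {x, y} := vmk_fst hn hyx
          have hsub : (vmk hn x y).1 ⊆ A i := by
            rw [hfst]
            intro u hu
            simp only [Finset.mem_insert, Finset.mem_singleton] at hu
            rcases hu with rfl | rfl
            · exact hiT.2
            · exact hyA
          have hvC := (hmemA hiT.1).mpr hsub
          have hyPx : y ∈ Px := by
            rw [hPxdef]
            exact Finset.mem_erase.mpr ⟨hyx, hallsub i hiT.1 hyA⟩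
          exact ⟨hyPx, hcleq hvC⟩
      rw [hfeq, Finset.card_erase_of_mem hiT.2, hcardA hiT.1]
    rw [Finset.sum_congr rfl hfib2, Finset.sum_const, smul_eq_mul] at hfib
    omega
  · -- m = 7
    have h21 : (7:ℕ).choose 2 = 21 := by decide
    rw [h7, h21] at hchoose
    omega

end Stmt12


/-- For every `n ≥ 6`, `χ_td(KG(n,2)) = n`. -/
theorem stmt12 (n : ℕ) (hn : 6 ≤ n) :
    tdChromNum (KG2 n) = n := by
  have hmem : n ∈ {k | ∃ C : Fin k → Set (KVert n), IsTDColoring (KG2 n) C} :=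
    Stmt12.upper hn
  have hlb : ∀ k ∈ {k | ∃ C : Fin k → Set (KVert n), IsTDColoring (KG2 n) C}, n ≤ k := by
    intro k hk
    by_contra hlt
    push_neg at hlt
    obtain ⟨C, hC⟩ := hk
    exact Stmt12.lower hn (by omega) C hC
  exact le_antisymm (Nat.sInf_le hmem) (le_csInf ⟨n, hmem⟩ hlb)
end

section
/- For n ≥ 2, every independent set A of vertices in the Kneser graph KG(n,2) is either starlike (there exists a symbol a ∈ {1,…,n} contained in every 2-subset belonging to A) or equals {{a,b},{a,c},{b,c}} for some three distinct symbols a,b,c ∈ {1,…,n}. -/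
lemma pair_of_mem_s13 {α : Type*} [DecidableEq α] {s : Finset α} {x : α}
    (hs : s.card = 2) (hx : x ∈ s) : ∃ y, y ≠ x ∧ s = {x, y} := by
  obtain ⟨p, q, hpq, rfl⟩ := Finset.card_eq_two.mp hs
  rcases Finset.mem_insert.mp hx with rfl | hx
  · exact ⟨q, hpq.symm, rfl⟩
  · rw [Finset.mem_singleton] at hx; subst hx
    exact ⟨p, hpq, Finset.pair_comm p x⟩

lemma tri_aux {α : Type*} [DecidableEq α] {a b c : α}
    (hab : a ≠ b) (hac : a ≠ c) (hbc : b ≠ c) {t : Finset α} (ht : t.card = 2)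
    (h1 : ¬ Disjoint t ({a, b} : Finset α)) (h2 : ¬ Disjoint t ({a, c} : Finset α))
    (h3 : ¬ Disjoint t ({b, c} : Finset α)) :
    t = {a, b} ∨ t = {a, c} ∨ t = {b, c} := by
  obtain ⟨x1, hx1t, hx1⟩ := Finset.not_disjoint_iff.mp h1
  obtain ⟨x2, hx2t, hx2⟩ := Finset.not_disjoint_iff.mp h2
  obtain ⟨x3, hx3t, hx3⟩ := Finset.not_disjoint_iff.mp h3
  obtain ⟨p, q, hpq, rfl⟩ := Finset.card_eq_two.mp ht
  simp only [Finset.mem_insert, Finset.mem_singleton] at hx1 hx2 hx3 hx1t hx2t hx3t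
  rcases hx1t with rfl | rfl <;> rcases hx2t with rfl | rfl <;>
    rcases hx3t with rfl | rfl <;>
    rcases hx1 with rfl | rfl <;> rcases hx2 with h2' | h2' <;>
    rcases hx3 with h3' | h3' <;>
    simp_all [Finset.pair_comm, Finset.insert_comm]

/-- For `n ≥ 2`, every independent set of vertices of `KG(n,2)` is
either starlike or equals `{{a,b},{a,c},{b,c}}` for three distinct symbols `a,b,c`. -/
theorem stmt13 (n : ℕ) (hn : 2 ≤ n) (A : Set (KVert n))
    (hA : ∀ u ∈ A, ∀ v ∈ A, ¬ (KG2 n).Adj u v) :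
    Starlike A ∨ Triangular A := by
  by_cases hstar : ∃ a : Fin n, ∀ v ∈ A, a ∈ v.1
  · exact Or.inl hstar
  push_neg at hstar
  right
  have hA0 : A.Nonempty := by
    by_contra h
    rw [Set.not_nonempty_iff_eq_empty] at h
    obtain ⟨v, hv, -⟩ := hstar ⟨0, by omega⟩
    simp [h] at hv
  obtain ⟨u, hu⟩ := hA0
  obtain ⟨a, b, hab, hu1⟩ := Finset.card_eq_two.mp u.2
  -- get a vertex not containing a
  obtain ⟨v, hv, hva⟩ := hstar a
  have hmeet : ∀ s ∈ A, ∀ t ∈ A, ¬ Disjoint s.1 t.1 := by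
    intro s hs t ht
    exact hA s hs t ht
  have hbv : b ∈ v.1 := by
    obtain ⟨x, hxu, hxv⟩ := Finset.not_disjoint_iff.mp (hmeet u hu v hv)
    rw [hu1] at hxu
    rcases Finset.mem_insert.mp hxu with rfl | hx
    · exact absurd hxv hva
    · rw [Finset.mem_singleton] at hx; subst hx; exact hxv
  obtain ⟨c, hcb, hv1⟩ := pair_of_mem_s13 v.2 hbv
  have hac : a ≠ c := by
    rintro rfl; exact hva (hv1 ▸ Finset.mem_insert_of_mem (Finset.mem_singleton_self _))
  have hbc : b ≠ c := fun h => hcb h.symm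
  -- get a vertex not containing b
  obtain ⟨w, hw, hwb⟩ := hstar b
  have haw : a ∈ w.1 := by
    obtain ⟨x, hxu, hxw⟩ := Finset.not_disjoint_iff.mp (hmeet u hu w hw)
    rw [hu1] at hxu
    rcases Finset.mem_insert.mp hxu with rfl | hx
    · exact hxw
    · rw [Finset.mem_singleton] at hx; subst hx; exact absurd hxw hwb
  have hcw : c ∈ w.1 := by
    obtain ⟨x, hxv, hxw⟩ := Finset.not_disjoint_iff.mp (hmeet v hv w hw)
    rw [hv1] at hxv
    rcases Finset.mem_insert.mp hxv with rfl | hx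
    · exact absurd hxw hwb
    · rw [Finset.mem_singleton] at hx; subst hx; exact hxw
  have hw1 : w.1 = {a, c} := by
    refine (Finset.eq_of_subset_of_card_le ?_ ?_).symm
    · intro x hx
      rcases Finset.mem_insert.mp hx with rfl | hx
      · exact haw
      · rw [Finset.mem_singleton] at hx; subst hx; exact hcw
    · rw [w.2, Finset.card_insert_of_notMem (by simp [hac]), Finset.card_singleton]
  refine ⟨a, b, c, hab, hac, hbc, ?_⟩
  ext t
  simp only [Set.mem_setOf_eq]
  constructor
  · intro ht
    exact tri_aux hab hac hbc t.2 (hu1 ▸ hmeet t ht u hu) (hw1 ▸ hmeet t ht w hw)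
      (hv1 ▸ hmeet t ht v hv)
  · rintro (h | h | h)
    · have : t = u := Subtype.ext (h.trans hu1.symm)
      exact this ▸ hu
    · have : t = w := Subtype.ext (h.trans hw1.symm)
      exact this ▸ hw
    · have : t = v := Subtype.ext (h.trans hv1.symm)
      exact this ▸ hv
end

section
/- For every integer n ≥ 7, the following partition of the vertices of KG(n,2) into n classes is a total dominator coloring: V_1 = {{1,2}}, V_2 = {{3,4}}, V_3 = {{2,5},{2,6},{5,6}}, V_4 = {{1,5},{1,6}}, V_5 = {{3,1},{3,2},{3,5},{3,6}}, V_6 = {{4,1},{4,2},{4,5},{4,6}}, and for 7 ≤ i ≤ n, V_i = { {i,k} : k ≠ i, 1 ≤ k ≤ n } \ (V_1 ∪ ⋯ ∪ V_{i−1}). -/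
/-- The set of symbols of a vertex, as natural numbers. -/
def symbs {n : ℕ} (v : KVert n) : Finset ℕ := v.1.image Fin.val

/-- The color classes of the model coloring of `KG(n,2)` (symbols `0,…,n-1` playing the
role of the paper's `1,…,n`):
`V 0 = {{0,1}}`, `V 1 = {{2,3}}`, `V 2 = {{1,4},{1,5},{4,5}}`, `V 3 = {{0,4},{0,5}}`,
`V 4 = {{2,0},{2,1},{2,4},{2,5}}`, `V 5 = {{3,0},{3,1},{3,4},{3,5}}`, and for `i ≥ 6`,
`V i = {{i,k} : k ≠ i} \ (V 0 ∪ ⋯ ∪ V (i-1))`. -/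
def modelClass (n : ℕ) : ℕ → Set (KVert n)
  | 0 => {v | symbs v = {0, 1}}
  | 1 => {v | symbs v = {2, 3}}
  | 2 => {v | symbs v = {1, 4} ∨ symbs v = {1, 5} ∨ symbs v = {4, 5}}
  | 3 => {v | symbs v = {0, 4} ∨ symbs v = {0, 5}}
  | 4 => {v | symbs v = {2, 0} ∨ symbs v = {2, 1} ∨ symbs v = {2, 4} ∨ symbs v = {2, 5}}
  | 5 => {v | symbs v = {3, 0} ∨ symbs v = {3, 1} ∨ symbs v = {3, 4} ∨ symbs v = {3, 5}}
  | (i + 6) =>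
      {v | ∃ k : ℕ, k ≠ i + 6 ∧ symbs v = {i + 6, k}} \
        ⋃ (j : Fin (i + 6)), modelClass n j
termination_by i => i
decreasing_by exact j.isLt

section Helpers

lemma symbs_card {n : ℕ} (v : KVert n) : (symbs v).card = 2 := by
  rw [symbs, Finset.card_image_of_injective _ Fin.val_injective, v.2]

lemma symbs_lt {n : ℕ} (v : KVert n) {m : ℕ} (hm : m ∈ symbs v) : m < n := by
  rw [symbs, Finset.mem_image] at hm
  obtain ⟨a, -, rfl⟩ := hm
  exact a.isLt

lemma exists_pair {n : ℕ} (v : KVert n) :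
    ∃ a b : ℕ, a ≠ b ∧ a < n ∧ b < n ∧ symbs v = {a, b} := by
  obtain ⟨a, b, hab, h⟩ := Finset.card_eq_two.mp (symbs_card v)
  have ha : a ∈ symbs v := by rw [h]; simp
  have hb : b ∈ symbs v := by rw [h]; simp
  exact ⟨a, b, hab, symbs_lt v ha, symbs_lt v hb, h⟩

lemma adj_iff {n : ℕ} (u v : KVert n) :
    (KG2 n).Adj u v ↔ Disjoint (symbs u) (symbs v) := by
  rw [symbs, symbs, Finset.disjoint_image Fin.val_injective]
  rfl

/-- Membership predicate for small classes. -/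
def smallMem (j : ℕ) (s : Finset ℕ) : Prop :=
  match j with
  | 0 => s = {0, 1}
  | 1 => s = {2, 3}
  | 2 => s = {1, 4} ∨ s = {1, 5} ∨ s = {4, 5}
  | 3 => s = {0, 4} ∨ s = {0, 5}
  | 4 => s = {2, 0} ∨ s = {2, 1} ∨ s = {2, 4} ∨ s = {2, 5}
  | 5 => s = {3, 0} ∨ s = {3, 1} ∨ s = {3, 4} ∨ s = {3, 5}
  | _ + 6 => False

instance (j : ℕ) (s : Finset ℕ) : Decidable (smallMem j s) := by
  unfold smallMem; split <;> infer_instance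

lemma small_mem_iff {n : ℕ} (j : ℕ) (hj : j < 6) (v : KVert n) :
    v ∈ modelClass n j ↔ smallMem j (symbs v) := by
  interval_cases j <;> rw [modelClass] <;> rfl

lemma smallMem_lt {j : ℕ} {s : Finset ℕ} (h : smallMem j s) {m : ℕ} (hm : m ∈ s) : m < 6 := by
  unfold smallMem at h
  split at h
  · subst h; simp at hm; omega
  · subst h; simp at hm; omega
  · rcases h with h | h | h <;> subst h <;> simp at hm <;> omega
  · rcases h with h | h <;> subst h <;> simp at hm <;> omega
  · rcases h with h | h | h | h <;> subst h <;> simp at hm <;> omega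
  · rcases h with h | h | h | h <;> subst h <;> simp at hm <;> omega
  · exact h.elim

end Helpers

lemma big_mem_iff {n : ℕ} : ∀ (i : ℕ), 6 ≤ i → ∀ v : KVert n,
    (v ∈ modelClass n i ↔ i ∈ symbs v ∧ ∀ m ∈ symbs v, m < 6 ∨ i ≤ m) := by
  intro i
  induction i using Nat.strong_induction_on with
  | _ i IH =>
    intro hi v
    obtain ⟨k, rfl⟩ : ∃ k, i = k + 6 := ⟨i - 6, by omega⟩
    rw [modelClass]
    simp only [Set.mem_diff, Set.mem_setOf_eq, Set.mem_iUnion]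
    constructor
    · rintro ⟨⟨m, hm, hsym⟩, hnot⟩
      constructor
      · rw [hsym]; simp
      · intro x hx
        rw [hsym] at hx
        simp only [Finset.mem_insert, Finset.mem_singleton] at hx
        rcases hx with rfl | rfl
        · right; omega
        · by_contra hc
          push_neg at hc
          obtain ⟨h6, hlt⟩ := hc
          exact hnot ⟨⟨x, by omega⟩, ((IH x (by omega) h6 v).mpr
            ⟨by rw [hsym]; simp, by
              intro m' hm'
              rw [hsym] at hm'
              simp only [Finset.mem_insert, Finset.mem_singleton] at hm'
              rcases hm' with rfl | rfl
              · right; omega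
              · right; omega⟩)⟩
    · rintro ⟨hmem, hall⟩
      obtain ⟨a, b, hab, ha, hb, hs⟩ := exists_pair v
      constructor
      · rw [hs] at hmem
        simp only [Finset.mem_insert, Finset.mem_singleton] at hmem
        rcases hmem with rfl | rfl
        · exact ⟨b, fun h => hab h.symm, hs⟩
        · exact ⟨a, hab, by rw [hs, Finset.pair_comm]⟩
      · rintro ⟨j, hj⟩
        rcases lt_or_ge (j : ℕ) 6 with h6 | h6
        · rw [small_mem_iff _ h6] at hj
          have := smallMem_lt hj hmem
          omega
        · rw [IH j j.isLt h6 v] at hj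
          obtain ⟨hjm, -⟩ := hj
          have := hall _ hjm
          have hjlt := j.isLt
          -- j ∈ symbs v, j ≥ 6, so k+6 ≤ j, but j < k+6
          omega

lemma smallMem_unique {i j : ℕ} {s : Finset ℕ} (hi : smallMem i s) (hj : smallMem j s) :
    i = j := by
  unfold smallMem at hi hj
  split at hi <;> split at hj <;>
    first
      | rfl
      | exact hi.elim
      | exact hj.elim
      | (rcases hi with rfl | rfl | rfl | rfl <;> revert hj <;> decide)
      | (rcases hi with rfl | rfl | rfl <;> revert hj <;> decide)
      | (rcases hi with rfl | rfl <;> revert hj <;> decide)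
      | (subst hi; revert hj; decide)

lemma smallMem_exists (a b : ℕ) (ha : a < 6) (hb : b < 6) (hab : a ≠ b) :
    ∃ c : Fin 6, smallMem c ({a, b} : Finset ℕ) := by
  interval_cases a <;> interval_cases b <;> first | omega | exact (by decide)

lemma classify {n : ℕ} (v : KVert n) :
    ∃ c : ℕ, c < max n 6 ∧ v ∈ modelClass n c ∧ ∀ j, v ∈ modelClass n j → j = c := by
  obtain ⟨a, b, hab, ha, hb, hs⟩ := exists_pair v
  have unique : ∀ i j, v ∈ modelClass n i → v ∈ modelClass n j → i = j := by
    intro i j hi hj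
    rcases lt_or_ge i 6 with h6i | h6i <;> rcases lt_or_ge j 6 with h6j | h6j
    · exact smallMem_unique ((small_mem_iff _ h6i v).mp hi) ((small_mem_iff _ h6j v).mp hj)
    · rw [small_mem_iff _ h6i v] at hi
      rw [big_mem_iff _ h6j v] at hj
      have := smallMem_lt hi hj.1
      omega
    · rw [small_mem_iff _ h6j v] at hj
      rw [big_mem_iff _ h6i v] at hi
      have := smallMem_lt hj hi.1
      omega
    · rw [big_mem_iff _ h6i v] at hi
      rw [big_mem_iff _ h6j v] at hj
      have h1 := hi.2 _ hj.1
      have h2 := hj.2 _ hi.1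
      omega
  rcases lt_or_ge a 6 with h6a | h6a <;> rcases lt_or_ge b 6 with h6b | h6b
  · obtain ⟨c, hc⟩ := smallMem_exists a b h6a h6b hab
    have hv : v ∈ modelClass n (c : ℕ) := by
      rw [small_mem_iff _ c.isLt v, hs]; exact hc
    exact ⟨c, by have := c.isLt; omega, hv, fun j hj => unique j c hj hv⟩
  · have hv : v ∈ modelClass n b := by
      rw [big_mem_iff _ h6b v]
      refine ⟨by rw [hs]; simp, ?_⟩
      intro m hm
      rw [hs] at hm
      simp only [Finset.mem_insert, Finset.mem_singleton] at hm
      rcases hm with rfl | rfl <;> omega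
    exact ⟨b, by omega, hv, fun j hj => unique j b hj hv⟩
  · have hv : v ∈ modelClass n a := by
      rw [big_mem_iff _ h6a v]
      refine ⟨by rw [hs]; simp, ?_⟩
      intro m hm
      rw [hs] at hm
      simp only [Finset.mem_insert, Finset.mem_singleton] at hm
      rcases hm with rfl | rfl <;> omega
    exact ⟨a, by omega, hv, fun j hj => unique j a hj hv⟩
  · have hv : v ∈ modelClass n (min a b) := by
      rw [big_mem_iff _ (by omega) v]
      refine ⟨by rw [hs]; rcases min_cases a b with ⟨h, -⟩ | ⟨h, -⟩ <;> rw [h] <;> simp, ?_⟩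
      intro m hm
      rw [hs] at hm
      simp only [Finset.mem_insert, Finset.mem_singleton] at hm
      rcases hm with rfl | rfl <;> omega
    exact ⟨min a b, by omega, hv, fun j hj => unique j _ hj hv⟩

/-- Construct a vertex from two distinct symbols. -/
def mkV {n : ℕ} (a b : ℕ) (ha : a < n) (hb : b < n) (hab : a ≠ b) : KVert n :=
  ⟨{⟨a, ha⟩, ⟨b, hb⟩}, Finset.card_pair (by simpa [Fin.ext_iff] using hab)⟩

lemma symbs_mkV {n : ℕ} (a b : ℕ) (ha : a < n) (hb : b < n) (hab : a ≠ b) :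
    symbs (mkV a b ha hb hab) = {a, b} := by
  simp [symbs, mkV]

lemma class_nonempty {n : ℕ} (hn : 7 ≤ n) (i : ℕ) (hi : i < n) :
    (modelClass n i).Nonempty := by
  rcases lt_or_ge i 6 with h6 | h6
  · interval_cases i
    · exact ⟨mkV 0 1 (by omega) (by omega) (by omega),
        (small_mem_iff 0 (by omega) _).mpr (by rw [symbs_mkV]; decide)⟩
    · exact ⟨mkV 2 3 (by omega) (by omega) (by omega),
        (small_mem_iff 1 (by omega) _).mpr (by rw [symbs_mkV]; decide)⟩
    · exact ⟨mkV 1 4 (by omega) (by omega) (by omega),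
        (small_mem_iff 2 (by omega) _).mpr (by rw [symbs_mkV]; decide)⟩
    · exact ⟨mkV 0 4 (by omega) (by omega) (by omega),
        (small_mem_iff 3 (by omega) _).mpr (by rw [symbs_mkV]; decide)⟩
    · exact ⟨mkV 2 0 (by omega) (by omega) (by omega),
        (small_mem_iff 4 (by omega) _).mpr (by rw [symbs_mkV]; decide)⟩
    · exact ⟨mkV 3 0 (by omega) (by omega) (by omega),
        (small_mem_iff 5 (by omega) _).mpr (by rw [symbs_mkV]; decide)⟩
  · refine ⟨mkV 0 i (by omega) hi (by omega), (big_mem_iff i h6 _).mpr ?_⟩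
    rw [symbs_mkV]
    refine ⟨by simp, ?_⟩
    intro m hm
    simp only [Finset.mem_insert, Finset.mem_singleton] at hm
    rcases hm with rfl | rfl <;> omega

lemma smallMem_not_disjoint {j : ℕ} (hj : j < 6) {s t : Finset ℕ}
    (hs : smallMem j s) (ht : smallMem j t) : ¬ Disjoint s t := by
  interval_cases j <;>
    simp only [smallMem] at hs ht <;>
    first
      | (rcases hs with rfl | rfl | rfl | rfl <;> rcases ht with rfl | rfl | rfl | rfl <;> decide)
      | (rcases hs with rfl | rfl | rfl <;> rcases ht with rfl | rfl | rfl <;> decide)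
      | (rcases hs with rfl | rfl <;> rcases ht with rfl | rfl <;> decide)
      | (subst hs; subst ht; decide)

lemma disj_concrete (a b x y : ℕ) (h1 : a ≠ x) (h2 : a ≠ y) (h3 : b ≠ x) (h4 : b ≠ y) :
    Disjoint ({a, b} : Finset ℕ) ({x, y} : Finset ℕ) := by
  rw [Finset.disjoint_left]
  intro m hm hmt
  simp only [Finset.mem_insert, Finset.mem_singleton] at hm hmt
  omega

lemma dominate {n : ℕ} (v : KVert n) :
    ∃ c : ℕ, c < 4 ∧ ∀ u ∈ modelClass n c, (KG2 n).Adj v u := by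
  obtain ⟨a, b, hab, ha, hb, hs⟩ := exists_pair v
  have key : ∀ c : ℕ, c < 6 → (∀ s : Finset ℕ, smallMem c s → Disjoint ({a, b} : Finset ℕ) s) →
      ∀ u ∈ modelClass n c, (KG2 n).Adj v u := by
    intro c hc h u hu
    rw [adj_iff, hs]
    exact h _ ((small_mem_iff c hc u).mp hu)
  by_cases h0 : a ≠ 0 ∧ a ≠ 1 ∧ b ≠ 0 ∧ b ≠ 1
  · refine ⟨0, by omega, key 0 (by omega) ?_⟩
    intro s hsm
    simp only [smallMem] at hsm
    subst hsm
    exact disj_concrete _ _ _ _ h0.1 h0.2.1 h0.2.2.1 h0.2.2.2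
  · by_cases h1 : a ≠ 2 ∧ a ≠ 3 ∧ b ≠ 2 ∧ b ≠ 3
    · refine ⟨1, by omega, key 1 (by omega) ?_⟩
      intro s hsm
      simp only [smallMem] at hsm
      subst hsm
      exact disj_concrete _ _ _ _ h1.1 h1.2.1 h1.2.2.1 h1.2.2.2
    · push_neg at h0 h1
      by_cases hz : a = 0 ∨ b = 0
      · refine ⟨2, by omega, key 2 (by omega) ?_⟩
        intro s hsm
        simp only [smallMem] at hsm
        rcases hsm with rfl | rfl | rfl <;>
          exact disj_concrete _ _ _ _ (by omega) (by omega) (by omega) (by omega)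
      · refine ⟨3, by omega, key 3 (by omega) ?_⟩
        intro s hsm
        simp only [smallMem] at hsm
        rcases hsm with rfl | rfl <;>
          exact disj_concrete _ _ _ _ (by omega) (by omega) (by omega) (by omega)

/-- For every `n ≥ 7`, the model partition of the vertices of
`KG(n,2)` into `n` classes is a total dominator coloring. -/
theorem stmt14 (n : ℕ) (hn : 7 ≤ n) :
    IsTDColoring (KG2 n) (fun i : Fin n => modelClass n (i : ℕ)) := by
  constructor
  · refine ⟨?_, ?_, ?_⟩
    · intro v
      obtain ⟨c, hc, hv, huniq⟩ := classify v
      have hcn : c < n := by omega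
      refine ⟨⟨c, hcn⟩, hv, ?_⟩
      intro i hi
      exact Fin.ext (huniq _ hi)
    · intro i
      exact class_nonempty hn i i.isLt
    · intro i u hu w hw hadj
      rw [adj_iff] at hadj
      rcases lt_or_ge (i : ℕ) 6 with h6 | h6
      · exact smallMem_not_disjoint h6 ((small_mem_iff _ h6 u).mp hu)
          ((small_mem_iff _ h6 w).mp hw) hadj
      · rw [big_mem_iff _ h6] at hu hw
        exact (Finset.disjoint_left.mp hadj hu.1) hw.1
  · intro v
    obtain ⟨c, hc, hadj⟩ := dominate v
    exact ⟨⟨c, by omega⟩, class_nonempty hn c (by omega), hadj⟩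
end
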